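/- arXiv:2503.23435 — 4 statements merged into one kernel-verified Lean document; each statement's English description precedes it below -/
import Mathlib

section
/- (Theorem D) Let G be a finitely generated post-injunctive group and let A be a finite alphabet. Let M ⊆ G be finite and S = A^(A^M). Suppose that σ_s : A^G → A^G is stably post-surjective for some s ∈ S^G with uniformly bounded singularity. Then σ_s is stably invertible. -/
open Function Set Pointwise

section Defs

variable {G A S : Type*} [Group G]

/-- The NUCA `σ_s : A^G → A^G` determined by the configuration of local
defining maps `s ∈ S^G`, `S = A^(A^M)`:
`σ_s(x)(g) = s(g)((g⁻¹x)|_M)` where `(g⁻¹x)(h) = x(gh)`. -/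
def nuca {M : Finset G} (s : G → ((M → A) → A)) : (G → A) → (G → A) :=
  fun x g => s g fun m => x (g * (m : G))

/-- The closure, in the prodiscrete topology on `S^G`, of the shift orbit
`{gs : g ∈ G}`, where `(gs)(h) = s(g⁻¹h)`. -/
def orbitClosure (s : G → S) : Set (G → S) :=
  @closure (G → S) (@Pi.topologicalSpace G (fun _ => S) fun _ => ⊥)
    {p | ∃ g : G, p = fun h => s (g⁻¹ * h)}

/-- `τ` is a NUCA with finite memory. -/
def IsNUCAFin (τ : (G → A) → (G → A)) : Prop :=
  ∃ (M : Finset G) (s : G → ((M → A) → A)), τ = nuca s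

/-- `τ` is invertible: it is bijective and its inverse is a NUCA with finite memory. -/
def IsInvertibleNUCA (τ : (G → A) → (G → A)) : Prop :=
  Function.Bijective τ ∧ ∃ ρ : (G → A) → (G → A), IsNUCAFin ρ ∧
    Function.LeftInverse ρ τ ∧ Function.RightInverse ρ τ

/-- `σ_s` is stably injective: `σ_p` is injective for every `p ∈ Σ(s)`. -/
def StablyInjective {M : Finset G} (s : G → ((M → A) → A)) : Prop :=
  ∀ p ∈ orbitClosure s, Function.Injective (nuca p)

/-- `σ_s` is stably invertible. -/
def StablyInvertible {M : Finset G} (s : G → ((M → A) → A)) : Prop :=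
  ∃ (N : Finset G) (t : G → ((N → A) → A)),
    ∀ p ∈ orbitClosure s, ∃ q ∈ orbitClosure t,
      nuca p ∘ nuca q = id ∧ nuca q ∘ nuca p = id

/-- Two configurations are asymptotic if they agree outside a finite set. -/
def Asymptotic (x y : G → S) : Prop :=
  ∃ Ω : Finset G, ∀ g ∉ Ω, x g = y g

/-- `s` is asymptotically constant. -/
def AsymptoticallyConstant (s : G → S) : Prop :=
  ∃ c : S, Asymptotic s fun _ => c

/-- `τ` is pre-injective. -/
def PreInjective (τ : (G → A) → (G → A)) : Prop :=
  ∀ x y : G → A, Asymptotic x y → τ x = τ y → x = y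

/-- `τ` is post-surjective. -/
def PostSurjective (τ : (G → A) → (G → A)) : Prop :=
  ∀ x y : G → A, Asymptotic y (τ x) → ∃ z : G → A, Asymptotic z x ∧ τ z = y

/-- `σ_s` is stably post-surjective: `σ_p` is post-surjective for all `p ∈ Σ(s)`. -/
def StablyPostSurjective {M : Finset G} (s : G → ((M → A) → A)) : Prop :=
  ∀ p ∈ orbitClosure s, PostSurjective (nuca p)

/-- `τ` is a cellular automaton: a NUCA with finite memory and a constant
configuration of local defining maps. -/
def IsCellularAutomaton (τ : (G → A) → (G → A)) : Prop :=
  ∃ (M : Finset G) (μ : (M → A) → A), τ = nuca fun _ : G => μ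

/-- `G` is surjunctive: over every finite alphabet, injective CA are surjective. -/
def Surjunctive (G : Type*) [Group G] : Prop :=
  ∀ (B : Type) [Fintype B] (τ : (G → B) → (G → B)),
    IsCellularAutomaton τ → Function.Injective τ → Function.Surjective τ

/-- `G` is post-injunctive: over every finite alphabet, post-surjective CA are
pre-injective. -/
def PostInjunctive (G : Type*) [Group G] : Prop :=
  ∀ (B : Type) [Fintype B] (τ : (G → B) → (G → B)),
    IsCellularAutomaton τ → PostSurjective τ → PreInjective τ

/-- `s` has uniformly bounded singularity: for every finite symmetric `E ∋ 1`
there is a finite `F ⊇ E` such that `s` is constant on `FE ∖ F`. -/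
def UniformlyBoundedSingularity (s : G → S) : Prop :=
  ∀ E : Finset G, (1 : G) ∈ E → (∀ g ∈ E, g⁻¹ ∈ E) →
    ∃ F : Finset G, E ⊆ F ∧ ∃ c : S,
      ∀ g ∈ ((F : Set G) * (E : Set G)) \ (F : Set G), s g = c

end Defs

set_option linter.unusedSectionVars false

section Basics

variable {G A : Type*} [Group G]

/-- The shift action on configurations. -/
def shf {S : Type*} (g : G) (p : G → S) : G → S := fun h => p (g⁻¹ * h)

lemma shf_shf {S : Type*} (g : G) (p : G → S) : shf g (shf g⁻¹ p) = p := by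
  funext h; simp [shf]

lemma shf_shf' {S : Type*} (g : G) (p : G → S) : shf g⁻¹ (shf g p) = p := by
  funext h; simp [shf]

lemma shf_inj {S : Type*} (g : G) {p q : G → S} (h : shf g p = shf g q) : p = q := by
  have := congrArg (shf g⁻¹) h
  rwa [shf_shf', shf_shf'] at this

variable {M : Finset G}

lemma nuca_apply (p : G → ((M → A) → A)) (x : G → A) (g : G) :
    nuca p x g = p g (fun m => x (g * (m : G))) := rfl

lemma nuca_congr {p : G → ((M → A) → A)} {x x' : G → A} {g : G}
    (h : ∀ m ∈ M, x (g * m) = x' (g * m)) : nuca p x g = nuca p x' g := by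
  unfold nuca; congr 1; funext m; exact h m m.2

/-- conjugation identity -/
lemma nuca_shf (p : G → ((M → A) → A)) (g : G) (x : G → A) :
    nuca (shf g p) (shf g x) = shf g (nuca p x) := by
  funext h
  simp only [nuca, shf, mul_assoc]

lemma comp_conj {N : Finset G} (a : G → ((M → A) → A)) (b : G → ((N → A) → A))
    (hab : ∀ x, nuca a (nuca b x) = x) (γ : G) (x : G → A) :
    nuca (shf γ a) (nuca (shf γ b) x) = x := by
  have hx : x = shf γ (shf γ⁻¹ x) := (shf_shf γ x).symm
  calc nuca (shf γ a) (nuca (shf γ b) x)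
      = nuca (shf γ a) (nuca (shf γ b) (shf γ (shf γ⁻¹ x))) := by rw [← hx]
    _ = nuca (shf γ a) (shf γ (nuca b (shf γ⁻¹ x))) := by rw [nuca_shf]
    _ = shf γ (nuca a (nuca b (shf γ⁻¹ x))) := by rw [nuca_shf]
    _ = shf γ (shf γ⁻¹ x) := by rw [hab]
    _ = x := shf_shf γ x

/-- Membership criterion for the orbit closure: matching on arbitrary
finite windows. -/
lemma mem_orbitClosure_iff {S : Type*} (s : G → S) (p : G → S) :
    p ∈ orbitClosure s ↔ ∀ W : Finset G, ∃ g : G, ∀ h ∈ W, p h = s (g⁻¹ * h) := by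
  letI : TopologicalSpace S := ⊥
  haveI : DiscreteTopology S := ⟨rfl⟩
  constructor
  · intro hp W
    have hopen : IsOpen {q : G → S | ∀ h ∈ W, q h = p h} := by
      have : {q : G → S | ∀ h ∈ W, q h = p h} = ⋂ h ∈ W, (fun q : G → S => q h) ⁻¹' {p h} := by
        ext q; simp
      rw [this]
      exact isOpen_biInter_finset fun h _ =>
        (continuous_apply h).isOpen_preimage _ (isOpen_discrete _)
    rcases mem_closure_iff.mp hp _ hopen (fun h _ => rfl) with ⟨q, hq1, g, rfl⟩
    exact ⟨g, fun h hh => (hq1 h hh).symm⟩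
  · intro H
    apply mem_closure_iff.mpr
    intro o ho hpo
    rcases isOpen_pi_iff.mp ho p hpo with ⟨I, u, hu, hsub⟩
    rcases H I with ⟨g, hg⟩
    refine ⟨fun h => s (g⁻¹ * h), hsub fun h hh => ?_, g, rfl⟩
    rw [← hg h hh]
    exact (hu h hh).2

lemma self_mem_orbitClosure {S : Type*} (s : G → S) : s ∈ orbitClosure s := by
  rw [mem_orbitClosure_iff]
  intro W
  exact ⟨1, fun h _ => by simp⟩

lemma shf_mem_orbitClosure {S : Type*} {s p : G → S} (hp : p ∈ orbitClosure s) (γ : G) :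
    shf γ p ∈ orbitClosure s := by
  classical
  rw [mem_orbitClosure_iff] at hp ⊢
  intro W
  rcases hp (W.image (γ⁻¹ * ·)) with ⟨g, hg⟩
  refine ⟨γ * g, fun h hh => ?_⟩
  have := hg (γ⁻¹ * h) (Finset.mem_image_of_mem _ hh)
  simpa [shf, mul_assoc] using this

lemma orbit_mem_orbitClosure {S : Type*} (s : G → S) (γ : G) :
    shf γ s ∈ orbitClosure s := shf_mem_orbitClosure (self_mem_orbitClosure s) γ

end Basics

section Ultra

open Filter

/-- limit of a finitely-valued sequence along an ultrafilter -/
lemma exists_ulim {α : Type*} [Finite α] (U : Ultrafilter ℕ) (f : ℕ → α) :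
    ∃ a, {n | f n = a} ∈ U := by
  by_contra h
  push_neg at h
  have hc : ∀ a : α, {n | f n = a}ᶜ ∈ U := fun a =>
    Ultrafilter.compl_mem_iff_notMem.mpr (h a)
  have hint : (⋂ a : α, {n | f n = a}ᶜ) ∈ U := Filter.iInter_mem.mpr hc
  have : (∅ : Set ℕ) ∈ U := by
    convert hint
    ext n
    simp
  exact Filter.empty_notMem (U : Filter ℕ) this

noncomputable def ulim {α : Type*} [Finite α] (U : Ultrafilter ℕ) (f : ℕ → α) : α :=
  Classical.choose (exists_ulim U f)

lemma ulim_spec {α : Type*} [Finite α] (U : Ultrafilter ℕ) (f : ℕ → α) :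
    {n | f n = ulim U f} ∈ U := Classical.choose_spec (exists_ulim U f)

/-- window agreement for pointwise ultrafilter limits of configurations -/
lemma ulim_window {G α : Type*} [Finite α] (U : Ultrafilter ℕ) (f : ℕ → G → α)
    (W : Finset G) : {n | ∀ h ∈ W, ulim U (fun n => f n h) = f n h} ∈ U := by
  have : (⋂ h ∈ W, {n | f n h = ulim U (fun n => f n h)}) ∈ U :=
    (Filter.biInter_finset_mem W).mpr fun h _ => ulim_spec U _
  refine Filter.mem_of_superset this ?_
  intro n hn
  simp only [Set.mem_iInter, Set.mem_setOf_eq] at hn ⊢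
  exact fun h hh => (hn h hh).symm

lemma tail_mem_hyper (n₀ : ℕ) : {n | n₀ ≤ n} ∈ Filter.hyperfilter ℕ := by
  have : {n | n₀ ≤ n} ∈ (Filter.cofinite : Filter ℕ) := by
    rw [Filter.mem_cofinite]
    have : {n : ℕ | n₀ ≤ n}ᶜ = {n | n < n₀} := by ext n; simp [not_le]
    rw [this]
    exact Set.finite_lt_nat n₀
  exact Filter.hyperfilter_le_cofinite this

end Ultra

section Gen

variable {G : Type*} [Group G] [DecidableEq G]

/-- a symmetric generating finset data for a f.g. group -/
lemma exists_sym_gen (G : Type*) [Group G] [DecidableEq G] [Group.FG G] :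
    ∃ E : Finset G, (1 : G) ∈ E ∧ (∀ g ∈ E, g⁻¹ ∈ E) ∧ (∀ g : G, ∃ n, g ∈ E ^ n) := by
  obtain ⟨Sset, hcl, hfin⟩ := Group.fg_iff.mp ‹Group.FG G›
  obtain ⟨T, rfl⟩ : ∃ T : Finset G, (T : Set G) = Sset := ⟨hfin.toFinset, hfin.coe_toFinset⟩
  refine ⟨T ∪ T.image (·⁻¹) ∪ {1}, by simp, ?_, ?_⟩
  · intro g hg
    simp only [Finset.mem_union, Finset.mem_image, Finset.mem_singleton] at hg ⊢
    rcases hg with (h | ⟨a, ha, rfl⟩) | rfl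
    · exact Or.inl (Or.inr ⟨g, h, rfl⟩)
    · simp [ha]
    · simp
  · intro g
    set E := T ∪ T.image (·⁻¹) ∪ {1} with hE
    have hmem : g ∈ Subgroup.closure (T : Set G) := by rw [hcl]; trivial
    induction hmem using Subgroup.closure_induction with
    | mem x hx =>
        refine ⟨1, ?_⟩
        simp only [hE, pow_one, Finset.mem_union, Finset.mem_image, Finset.mem_singleton]
        exact Or.inl (Or.inl hx)
    | one => exact ⟨0, by simp⟩
    | mul x y hx hy ihx ihy =>
        rcases ihx with ⟨n, hn⟩; rcases ihy with ⟨m, hm⟩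
        exact ⟨n + m, by rw [pow_add]; exact Finset.mul_mem_mul hn hm⟩
    | inv x hx ih =>
        rcases ih with ⟨n, hn⟩
        refine ⟨n, ?_⟩
        clear hx
        induction n generalizing x with
        | zero => simp_all
        | succ k ih =>
            rw [pow_succ] at hn
            rcases Finset.mem_mul.mp hn with ⟨a, ha, b, hb, rfl⟩
            have hb' : b⁻¹ ∈ E := by
              simp only [hE, Finset.mem_union, Finset.mem_image, Finset.mem_singleton] at hb ⊢
              rcases hb with (h | ⟨u, hu, rfl⟩) | rfl
              · exact Or.inl (Or.inr ⟨b, h, rfl⟩)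
              · simp [hu]
              · simp
            have := ih a ha
            rw [pow_succ']
            rw [mul_inv_rev]
            exact Finset.mul_mem_mul hb' this

lemma sym_pow {E : Finset G} (hsym : ∀ g ∈ E, g⁻¹ ∈ E) :
    ∀ n, ∀ g ∈ E ^ n, g⁻¹ ∈ E ^ n := by
  intro n
  induction n with
  | zero => intro g hg; simp only [pow_zero, Finset.mem_one] at hg ⊢; simp [hg]
  | succ k ih =>
      intro g hg
      rw [pow_succ] at hg
      rcases Finset.mem_mul.mp hg with ⟨a, ha, b, hb, rfl⟩
      rw [mul_inv_rev, pow_succ']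
      exact Finset.mul_mem_mul (hsym b hb) (ih a ha)

/-- every finite set is inside some power of a generating symmetric finset -/
lemma subset_pow {E : Finset G} (h1 : (1:G) ∈ E) (hgen : ∀ g : G, ∃ n, g ∈ E ^ n)
    (W : Finset G) : ∃ k, W ⊆ E ^ k := by
  classical
  induction W using Finset.induction with
  | empty => exact ⟨0, by simp⟩
  | @insert a W ha ih =>
      rcases ih with ⟨k, hk⟩
      rcases hgen a with ⟨m, hm⟩
      refine ⟨max m k, ?_⟩
      intro g hg
      rcases Finset.mem_insert.mp hg with rfl | hg
      · exact Finset.pow_subset_pow_right h1 (le_max_left _ _) hm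
      · exact Finset.pow_subset_pow_right h1 (le_max_right _ _) (hk hg)

end Gen

section Core

open Filter

variable {G A : Type*} [Group G] [Fintype A] [DecidableEq G] {M : Finset G}

local notation "U" => Filter.hyperfilter ℕ

/-- a post-surjective NUCA over a compact configuration space is surjective -/
lemma surj_of_postsurj {E : Finset G} (h1E : (1:G) ∈ E)
    (hgenE : ∀ g : G, ∃ n, g ∈ E ^ n) (p : G → ((M → A) → A))
    (hps : PostSurjective (nuca p)) (x₀ : G → A) : Surjective (nuca p) := by
  intro y
  have hasym : ∀ n : ℕ, Asymptotic (fun g => if g ∈ E ^ n then y g else nuca p x₀ g)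
      (nuca p x₀) := fun n => ⟨E ^ n, fun g hg => if_neg hg⟩
  choose z hz1 hz2 using fun n => hps x₀ _ (hasym n)
  refine ⟨fun g => ulim U (fun n => z n g), ?_⟩
  funext g
  rcases hgenE g with ⟨k, hk⟩
  have hmem : ({n | ∀ h ∈ M.image (g * ·), ulim U (fun n => z n h) = z n h} ∩ {n | k ≤ n}) ∈ U :=
    Filter.inter_mem (ulim_window U (fun n h => z n h) _) (tail_mem_hyper k)
  rcases Ultrafilter.nonempty_of_mem hmem with ⟨n, hn1, hn2⟩
  have hwin : ∀ m ∈ M, ulim U (fun i => z i (g * m)) = z n (g * m) := by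
    intro m hm
    exact hn1 (g * m) (Finset.mem_image_of_mem _ hm)
  calc nuca p (fun g => ulim U (fun n => z n g)) g
      = p g (fun m => ulim U (fun i => z i (g * m))) := rfl
    _ = p g (fun m => z n (g * m)) := by
        congr 1; funext m; exact hwin m m.2
    _ = nuca p (z n) g := rfl
    _ = y g := by
        rw [hz2 n]
        exact if_pos (Finset.pow_subset_pow_right h1E hn2 hk)

variable (s : G → ((M → A) → A))

/-- uniform post-surjectivity over the orbit closure -/
lemma ups {E : Finset G} (h1E : (1:G) ∈ E) (hgenE : ∀ g : G, ∃ n, g ∈ E ^ n)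
    (hpost : ∀ p ∈ orbitClosure s, PostSurjective (nuca p)) (hMne : M.Nonempty) :
    ∃ V : Finset G, ∀ p ∈ orbitClosure s, ∀ x y : G → A,
      (∀ g : G, g ≠ 1 → y g = nuca p x g) →
      ∃ z, (∀ g, g ∉ V → z g = x g) ∧ nuca p z = y := by
  by_contra hno
  push_neg at hno
  choose P hP X Y hXY hFail using fun n => hno (E ^ n)
  set pstar : G → ((M → A) → A) := fun h => ulim U (fun n => P n h) with hpstar
  set xstar : G → A := fun h => ulim U (fun n => X n h) with hxstar
  set ystar : G → A := fun h => ulim U (fun n => Y n h) with hystar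
  have hpstarOC : pstar ∈ orbitClosure s := by
    rw [mem_orbitClosure_iff]
    intro W
    rcases Ultrafilter.nonempty_of_mem (ulim_window U P W) with ⟨n, hn⟩
    rcases (mem_orbitClosure_iff s (P n)).mp (hP n) W with ⟨g, hg⟩
    exact ⟨g, fun h hh => by rw [← hg h hh]; exact hn h hh⟩
  have hys : ∀ g : G, g ≠ 1 → ystar g = nuca pstar xstar g := by
    intro g hg
    have hmem : ({n | ∀ h ∈ ({g} : Finset G), ystar h = Y n h} ∩
        ({n | ∀ h ∈ M.image (g * ·), xstar h = X n h} ∩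
         {n | ∀ h ∈ ({g} : Finset G), pstar h = P n h})) ∈ U :=
      Filter.inter_mem (ulim_window U Y _)
        (Filter.inter_mem (ulim_window U X _) (ulim_window U P _))
    rcases Ultrafilter.nonempty_of_mem hmem with ⟨n, hn1, hn2, hn3⟩
    calc ystar g = Y n g := hn1 g (Finset.mem_singleton_self g)
      _ = nuca (P n) (X n) g := hXY n g hg
      _ = P n g (fun m => X n (g * m)) := rfl
      _ = pstar g (fun m => xstar (g * m)) := by
          rw [← hn3 g (Finset.mem_singleton_self g)]
          congr 1; funext m
          exact (hn2 (g * m) (Finset.mem_image_of_mem _ m.2)).symm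
      _ = nuca pstar xstar g := rfl
  obtain ⟨zstar, ⟨Ω₀, hΩ₀⟩, hzstar⟩ :=
    hpost pstar hpstarOC xstar ystar ⟨{1}, fun g hg => hys g (by simpa using hg)⟩
  set V₀ : Finset G := Ω₀ ∪ M with hV₀
  rcases subset_pow h1E hgenE V₀ with ⟨k, hkV₀⟩
  set Minv : Finset G := M.image (·⁻¹) with hMinv
  set WP : Finset G := V₀ * Minv with hWP
  set WX : Finset G := WP * M ∪ V₀ with hWX
  have hmem : ({n | k ≤ n} ∩ ({n | ∀ h ∈ WP, pstar h = P n h} ∩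
      ({n | ∀ h ∈ WP, ystar h = Y n h} ∩ {n | ∀ h ∈ WX, xstar h = X n h}))) ∈ U :=
    Filter.inter_mem (tail_mem_hyper k)
      (Filter.inter_mem (ulim_window U P _)
        (Filter.inter_mem (ulim_window U Y _) (ulim_window U X _)))
  rcases Ultrafilter.nonempty_of_mem hmem with ⟨n, hT1, hT2, hT3, hT4⟩
  set zn : G → A := fun g => if g ∈ V₀ then zstar g else X n g with hzn
  have hsupp : ∀ g, g ∉ E ^ n → zn g = X n g := by
    intro g hg
    have : g ∉ V₀ := fun hgV => hg ((Finset.pow_subset_pow_right h1E hT1) (hkV₀ hgV))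
    simp [hzn, this]
  have h1WP : (1:G) ∈ WP := by
    rcases hMne with ⟨m₀, hm₀⟩
    refine Finset.mem_mul.mpr ⟨m₀, Finset.mem_union_right _ hm₀, m₀⁻¹,
      Finset.mem_image_of_mem _ hm₀, mul_inv_cancel m₀⟩
  have heq : nuca (P n) zn = Y n := by
    funext g
    by_cases hg : g ∈ WP
    · have hwin : ∀ m ∈ M, zn (g * m) = zstar (g * m) := by
        intro m hm
        by_cases h2 : g * m ∈ V₀
        · simp [hzn, h2]
        · have hmemWX : g * m ∈ WX :=
            Finset.mem_union_left _ (Finset.mul_mem_mul hg hm)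
          have : zn (g * m) = X n (g * m) := by simp [hzn, h2]
          rw [this, ← hT4 _ hmemWX]
          exact (hΩ₀ (g * m) (fun hc => h2 (Finset.mem_union_left _ hc))).symm
      calc nuca (P n) zn g = P n g (fun m => zn (g * m)) := rfl
        _ = P n g (fun m => zstar (g * m)) := by
            congr 1; funext m; exact hwin m m.2
        _ = pstar g (fun m => zstar (g * m)) := by rw [← hT2 g hg]
        _ = ystar g := congrFun hzstar g
        _ = Y n g := hT3 g hg
    · have hgne : g ≠ 1 := fun hc => hg (hc ▸ h1WP)
      have hwin : ∀ m ∈ M, zn (g * m) = X n (g * m) := by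
        intro m hm
        have : g * m ∉ V₀ := by
          intro hc
          exact hg (Finset.mem_mul.mpr ⟨g * m, hc, m⁻¹,
            Finset.mem_image_of_mem _ hm, by group⟩)
        simp [hzn, this]
      calc nuca (P n) zn g = nuca (P n) (X n) g := by
            unfold nuca; congr 1; funext m; exact hwin m m.2
        _ = Y n g := (hXY n g hgne).symm
  exact hFail n zn hsupp heq

end Core

section Core2

variable {G A : Type*} [Group G] [Fintype A] [DecidableEq G] {M : Finset G}
variable (s : G → ((M → A) → A))

/-- single-point uniform post-surjectivity at an arbitrary point -/
lemma ups_pt {V : Finset G}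
    (hV : ∀ p ∈ orbitClosure s, ∀ x y : G → A,
      (∀ g : G, g ≠ 1 → y g = nuca p x g) →
      ∃ z, (∀ g, g ∉ V → z g = x g) ∧ nuca p z = y) :
    ∀ p ∈ orbitClosure s, ∀ (h : G) (x y : G → A),
      (∀ g : G, g ≠ h → y g = nuca p x g) →
      ∃ z, (∀ g, g ∉ V.image (h * ·) → z g = x g) ∧ nuca p z = y := by
  intro p hp h x y hy
  have hyt : ∀ g : G, g ≠ 1 → shf h⁻¹ y g = nuca (shf h⁻¹ p) (shf h⁻¹ x) g := by
    intro g hg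
    rw [nuca_shf]
    have : h * g ≠ h := fun hc => hg (by simpa using congrArg (h⁻¹ * ·) hc)
    simpa [shf] using hy (h * g) this
  obtain ⟨zt, hzt1, hzt2⟩ := hV (shf h⁻¹ p) (shf_mem_orbitClosure hp h⁻¹) _ _ hyt
  refine ⟨shf h zt, ?_, ?_⟩
  · intro g hg
    have : h⁻¹ * g ∉ V := fun hc => hg (Finset.mem_image.mpr ⟨h⁻¹ * g, hc, by simp⟩)
    have := hzt1 (h⁻¹ * g) this
    simpa [shf] using this
  · have : nuca (shf h (shf h⁻¹ p)) (shf h zt) = shf h (nuca (shf h⁻¹ p) zt) := by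
      rw [nuca_shf]
    rw [shf_shf] at this
    rw [this, hzt2, shf_shf]

/-- iterated uniform post-surjectivity: finitely many corrections -/
lemma ups_iter {V : Finset G}
    (hV : ∀ p ∈ orbitClosure s, ∀ x y : G → A,
      (∀ g : G, g ≠ 1 → y g = nuca p x g) →
      ∃ z, (∀ g, g ∉ V → z g = x g) ∧ nuca p z = y) :
    ∀ p ∈ orbitClosure s, ∀ (Ω : Finset G), ∀ x y : G → A,
      (∀ g, g ∉ Ω → y g = nuca p x g) →
      ∃ z, (∀ g, g ∉ Ω * V → z g = x g) ∧ nuca p z = y := by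
  intro p hp Ω
  induction Ω using Finset.induction with
  | empty =>
      intro x y hy
      refine ⟨x, fun g _ => rfl, ?_⟩
      funext g
      exact (hy g (by simp)).symm
  | @insert a Ω ha ih =>
      intro x y hy
      set y' : G → A := fun g => if g = a then nuca p x g else y g with hy'def
      have hy' : ∀ g, g ∉ Ω → y' g = nuca p x g := by
        intro g hg
        by_cases hga : g = a
        · simp [hy'def, hga]
        · simp only [hy'def, if_neg hga]
          exact hy g (by simp [hga, hg])
      obtain ⟨z₁, hz₁supp, hz₁⟩ := ih x y' hy'
      have hy2 : ∀ g : G, g ≠ a → y g = nuca p z₁ g := by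
        intro g hg
        rw [hz₁]
        simp [hy'def, hg]
      obtain ⟨z, hzsupp, hz⟩ := ups_pt s hV p hp a z₁ y hy2
      refine ⟨z, ?_, hz⟩
      intro g hg
      have h1 : g ∉ V.image (a * ·) := by
        intro hc
        rcases Finset.mem_image.mp hc with ⟨v, hv, rfl⟩
        exact hg (Finset.mul_mem_mul (Finset.mem_insert_self a Ω) hv)
      have h2 : g ∉ Ω * V := by
        intro hc
        exact hg (Finset.mul_subset_mul_right (Finset.subset_insert a Ω) hc)
      rw [hzsupp g h1, hz₁supp g h2]

end Core2

set_option linter.unusedSectionVars false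

section Core3

variable {G A : Type*} [Group G] [Fintype A] [DecidableEq G] {M : Finset G}
variable (s : G → ((M → A) → A))

/-- pre-injective + uniformly post-surjective implies injective (CKT-style) -/
lemma inj_of_preinj {V : Finset G}
    (hV : ∀ p ∈ orbitClosure s, ∀ x y : G → A,
      (∀ g : G, g ≠ 1 → y g = nuca p x g) →
      ∃ z, (∀ g, g ∉ V → z g = x g) ∧ nuca p z = y)
    (p : G → ((M → A) → A)) (hp : p ∈ orbitClosure s)
    (hpre : PreInjective (nuca p)) : Function.Injective (nuca p) := by
  intro x x' he
  by_contra hne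
  obtain ⟨g₀, hg₀⟩ := Function.ne_iff.mp hne
  set Vinv : Finset G := V.image (·⁻¹) with hVinv
  set B : Finset G := insert g₀ ((Vinv * M).image (g₀ * ·)) with hB
  set xB : G → A := fun g => if g ∈ B then x' g else x g with hxB
  set Minv : Finset G := M.image (·⁻¹) with hMinv
  set bd : Finset G := (B * Minv).filter (fun h => ¬ ∀ m ∈ M, h * m ∈ B) with hbd
  have hoff : ∀ h, h ∉ bd → nuca p x h = nuca p xB h := by
    intro h hh
    by_cases hall : ∀ m ∈ M, h * m ∈ B
    · have : nuca p xB h = nuca p x' h :=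
        nuca_congr (fun m hm => by simp [hxB, hall m hm])
      rw [this, ← he]
    · by_cases hex : ∃ m ∈ M, h * m ∈ B
      · exfalso
        apply hh
        rcases hex with ⟨m, hm, hmB⟩
        refine Finset.mem_filter.mpr ⟨?_, hall⟩
        exact Finset.mem_mul.mpr ⟨h * m, hmB, m⁻¹, Finset.mem_image_of_mem _ hm, by group⟩
      · push_neg at hex
        exact (nuca_congr (fun m hm => by simp [hxB, hex m hm])).symm
  obtain ⟨u, husupp, hu⟩ := ups_iter s hV p hp bd xB (nuca p x) hoff
  have hasym : Asymptotic u x := by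
    refine ⟨B ∪ bd * V, fun g hg => ?_⟩
    rw [husupp g (fun hc => hg (Finset.mem_union_right _ hc))]
    have hgB : g ∉ B := fun hc => hg (Finset.mem_union_left _ hc)
    simp [hxB, hgB]
  have hux : u = x := hpre u x hasym (by rw [hu])
  have hg₀bd : g₀ ∉ bd * V := by
    intro hc
    rcases Finset.mem_mul.mp hc with ⟨h, hh, v, hv, hevq⟩
    have hhB : ∀ m ∈ M, h * m ∈ B := by
      intro m hm
      have : h = g₀ * v⁻¹ := by rw [← hevq]; group
      rw [this]
      refine Finset.mem_insert_of_mem (Finset.mem_image.mpr ⟨v⁻¹ * m, ?_, by group⟩)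
      exact Finset.mul_mem_mul (Finset.mem_image_of_mem _ hv) hm
    exact (Finset.mem_filter.mp hh).2 hhB
  have : u g₀ = x' g₀ := by
    rw [husupp g₀ hg₀bd]
    simp [hxB, hB]
  rw [hux] at this
  exact hg₀ this

/-- pre-injectivity of `σ_s` transfers to all elements of the orbit closure -/
lemma preinj_all (hs : PreInjective (nuca s)) :
    ∀ p ∈ orbitClosure s, PreInjective (nuca p) := by
  intro p hp x x' hasym heq
  rcases hasym with ⟨Ω, hΩ⟩
  set Minv : Finset G := M.image (·⁻¹) with hMinv
  rcases (mem_orbitClosure_iff s p).mp hp (Ω * Minv) with ⟨g, hg⟩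
  have heq2 : nuca (shf g s) x = nuca (shf g s) x' := by
    funext h
    by_cases hh : h ∈ Ω * Minv
    · have h1 : nuca (shf g s) x h = nuca p x h := by
        unfold nuca shf
        rw [hg h hh]
      have h2 : nuca (shf g s) x' h = nuca p x' h := by
        unfold nuca shf
        rw [hg h hh]
      rw [h1, h2, heq]
    · refine nuca_congr (fun m hm => ?_)
      apply hΩ
      intro hc
      exact hh (Finset.mem_mul.mpr ⟨h * m, hc, m⁻¹, Finset.mem_image_of_mem _ hm, by group⟩)
  have hconj : ∀ w : G → A, nuca (shf g s) w = shf g (nuca s (shf g⁻¹ w)) := by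
    intro w
    have := nuca_shf s g (shf g⁻¹ w)
    rwa [shf_shf] at this
  rw [hconj x, hconj x'] at heq2
  have heq3 : nuca s (shf g⁻¹ x) = nuca s (shf g⁻¹ x') := shf_inj g heq2
  have hasym2 : Asymptotic (shf g⁻¹ x) (shf g⁻¹ x') := by
    refine ⟨Ω.image (g⁻¹ * ·), fun h hh => ?_⟩
    simp only [shf, inv_inv]
    apply hΩ
    intro hc
    exact hh (Finset.mem_image.mpr ⟨g * h, hc, by simp⟩)
  have := hs _ _ hasym2 heq3
  have := congrArg (shf g⁻¹) (shf_inj g⁻¹ this : x = x')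
  exact shf_inj g⁻¹ (by rw [this])

end Core3

section Shells

variable {G A : Type*} [Group G] [Fintype A] [DecidableEq G] {M : Finset G}

lemma annulus [Infinite G] (F A' : Finset G) (h1F : (1:G) ∈ F) (h1A : (1:G) ∈ A')
    (hgen : ∀ g : G, ∃ n, g ∈ A' ^ n) :
    ∃ h, h ∈ F * A' * A' ∧ h ∉ F * A' := by
  by_contra hno
  push_neg at hno
  have hstep : ∀ n, F * A' ^ (n+1) ⊆ F * A' := by
    intro n
    induction n with
    | zero => simp
    | succ k ih =>
        intro g hg
        rw [pow_succ, ← mul_assoc] at hg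
        rcases Finset.mem_mul.mp hg with ⟨a, ha, b, hb, rfl⟩
        exact hno _ (Finset.mul_mem_mul (ih ha) hb)
  have hall : ∀ g : G, g ∈ F * A' := by
    intro g
    rcases hgen g with ⟨n, hn⟩
    rcases n with _ | n
    · simp only [pow_zero, Finset.mem_one] at hn
      subst hn
      simpa using Finset.mul_mem_mul h1F h1A
    · have : g ∈ F * A' ^ (n+1) := by
        have : (1:G) * g = g := one_mul g
        rw [← this]
        exact Finset.mul_mem_mul h1F hn
      exact hstep n this
  rcases Infinite.exists_notMem_finset (F * A') with ⟨x, hx⟩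
  exact hx (hall x)

variable (s : G → ((M → A) → A))

/-- From uniformly bounded singularity: a constant `c` whose constant
configuration lies in the orbit closure, together with arbitrarily large
shells on which `s` equals `c`. -/
lemma exists_good_const [Infinite G] {E : Finset G} (h1E : (1:G) ∈ E)
    (hsymE : ∀ g ∈ E, g⁻¹ ∈ E) (hgenE : ∀ g : G, ∃ n, g ∈ E ^ n)
    (hubs : ∀ Ef : Finset G, (1 : G) ∈ Ef → (∀ g ∈ Ef, g⁻¹ ∈ Ef) →
      ∃ F : Finset G, Ef ⊆ F ∧ ∃ c : ((M → A) → A),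
        ∀ g ∈ ((F : Set G) * (Ef : Set G)) \ (F : Set G), s g = c) :
    ∃ c : ((M → A) → A), ((fun _ => c) ∈ orbitClosure s) ∧
      ∀ W B : Finset G, ∃ F : Finset G, W ⊆ F ∧ (1:G) ∈ F ∧
        ∀ g ∈ F * B, g ∉ F → s g = c := by
  have hEn1 : ∀ n, (1:G) ∈ E ^ n := fun n => Finset.one_mem_pow h1E
  have hEnsym := sym_pow hsymE
  choose F hFsub c hc using fun n => hubs (E ^ n) (hEn1 n) (hEnsym n)
  have hc' : ∀ n, ∀ g ∈ F n * E ^ n, g ∉ F n → s g = c n := by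
    intro n g hg hg2
    refine hc n g ⟨?_, hg2⟩
    rw [← Finset.coe_mul]
    exact_mod_cast hg
  obtain ⟨c₀, hc₀⟩ := Finite.exists_infinite_fiber c
  have hinf : {n | c n = c₀}.Infinite := by
    rw [← Set.infinite_coe_iff]
    exact hc₀
  -- generating property of powers E^k for k ≥ 1
  have hgenpow : ∀ k, 1 ≤ k → ∀ g : G, ∃ n, g ∈ (E ^ k) ^ n := by
    intro k hk g
    rcases hgenE g with ⟨n, hn⟩
    refine ⟨n, ?_⟩
    rw [← pow_mul]
    exact Finset.pow_subset_pow_right h1E (Nat.le_mul_of_pos_left n hk) hn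
  have key : ∀ W : Finset G, ∃ h₀ : G, ∀ w ∈ W, s (h₀ * w) = c₀ := by
    intro W
    rcases subset_pow h1E hgenE W with ⟨k₀, hk₀⟩
    set k := k₀ + 1 with hkdef
    have hWk : W ⊆ E ^ k := fun g hg =>
      Finset.pow_subset_pow_right h1E (Nat.le_succ k₀) (hk₀ hg)
    obtain ⟨n, hn_mem, hn_ge⟩ := hinf.exists_gt (3 * k)
    have hcn : c n = c₀ := hn_mem
    obtain ⟨h₀, hh₀1, hh₀2⟩ := annulus (F n) (E ^ k) (hFsub n (hEn1 n)) (hEn1 k)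
      (hgenpow k (Nat.le_add_left 1 k₀))
    refine ⟨h₀, fun w hw => ?_⟩
    have hmem : h₀ * w ∈ F n * E ^ n := by
      have h1 : h₀ * w ∈ F n * E ^ k * E ^ k * E ^ k :=
        Finset.mul_mem_mul hh₀1 (hWk hw)
      have h2 : F n * E ^ k * E ^ k * E ^ k = F n * E ^ (3 * k) := by
        rw [mul_assoc, mul_assoc, ← pow_add, ← pow_add]
        ring_nf
      rw [h2] at h1
      exact Finset.mul_subset_mul_left
        (Finset.pow_subset_pow_right h1E (le_of_lt hn_ge)) h1
    have hnot : h₀ * w ∉ F n := by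
      intro hc2
      apply hh₀2
      have : h₀ = (h₀ * w) * w⁻¹ := by group
      rw [this]
      exact Finset.mul_mem_mul hc2 (hEnsym k w (hWk hw))
    rw [← hcn]
    exact hc' n (h₀ * w) hmem hnot
  refine ⟨c₀, ?_, ?_⟩
  · rw [mem_orbitClosure_iff]
    intro W
    rcases key W with ⟨h₀, hh₀⟩
    exact ⟨h₀⁻¹, fun h hh => by rw [inv_inv]; exact (hh₀ h hh).symm⟩
  · intro W B
    rcases subset_pow h1E hgenE (W ∪ B) with ⟨k, hk⟩
    obtain ⟨n, hn_mem, hn_ge⟩ := hinf.exists_gt k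
    refine ⟨F n, ?_, hFsub n (hEn1 n), ?_⟩
    · intro g hg
      exact hFsub n (Finset.pow_subset_pow_right h1E (le_of_lt hn_ge)
        (hk (Finset.mem_union_left _ hg)))
    · intro g hg hg2
      have : g ∈ F n * E ^ n := by
        refine Finset.mul_subset_mul_left ?_ hg
        exact fun b hb => Finset.pow_subset_pow_right h1E (le_of_lt hn_ge)
          (hk (Finset.mem_union_right _ hb))
      rw [← (hn_mem : c n = c₀)]
      exact hc' n g this hg2

end Shells

section CAc

variable {G A : Type*} [Group G] [Fintype A] [DecidableEq G] {M : Finset G}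

/-- transport post-injunctivity of `G` to the alphabet `A` -/
lemma ca_preinj (hG : PostInjunctive G) (c : (M → A) → A)
    (hps : PostSurjective (nuca (fun _ : G => c))) :
    PreInjective (nuca (fun _ : G => c)) := by
  classical
  set k := Fintype.card A with hk
  set e : A ≃ Fin k := Fintype.equivFin A with he
  set c' : (M → Fin k) → Fin k := fun u => e (c (fun m => e.symm (u m))) with hc'
  have comm : ∀ x : G → A,
      nuca (fun _ : G => c') (fun g => e (x g)) = fun g => e (nuca (fun _ : G => c) x g) := by
    intro x
    funext g
    simp [nuca, hc']
  have hps' : PostSurjective (nuca (fun _ : G => c')) := by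
    intro X Y hasym
    set x : G → A := fun g => e.symm (X g) with hx
    have hX : X = fun g => e (x g) := by funext g; simp [hx]
    rcases hasym with ⟨Ω, hΩ⟩
    have hasym2 : Asymptotic (fun g => e.symm (Y g)) (nuca (fun _ : G => c) x) := by
      refine ⟨Ω, fun g hg => ?_⟩
      have h2 := hΩ g hg
      rw [hX, comm x] at h2
      show e.symm (Y g) = _
      rw [h2]
      simp
    rcases hps x _ hasym2 with ⟨z, ⟨Ω', hΩ'⟩, hz⟩
    refine ⟨fun g => e (z g), ⟨Ω', fun g hg => ?_⟩, ?_⟩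
    · show e (z g) = X g
      rw [hΩ' g hg, hX]
    · rw [comm z, hz]
      funext g
      simp
  have hpre' := hG (Fin k) (nuca (fun _ : G => c')) ⟨M, c', rfl⟩ hps'
  intro x x' hasym heq
  have h1 : nuca (fun _ : G => c') (fun g => e (x g)) = nuca (fun _ : G => c') (fun g => e (x' g)) := by
    rw [comm x, comm x', heq]
  rcases hasym with ⟨Ω, hΩ⟩
  have := hpre' _ _ ⟨Ω, fun g hg => by rw [hΩ g hg]⟩ h1
  funext g
  have := congrFun this g
  simpa using congrArg e.symm this

/-- extraction of an inverse CA for an injective and surjective CA -/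
lemma exists_inverse_ca {E : Finset G} (h1E : (1:G) ∈ E)
    (hgenE : ∀ g : G, ∃ n, g ∈ E ^ n) (c : (M → A) → A)
    (hinj : Function.Injective (nuca (fun _ : G => c)))
    (hsurj : Function.Surjective (nuca (fun _ : G => c))) (a₀ : A) :
    ∃ (N₀ : Finset G) (μ' : (N₀ → A) → A), (1:G) ∈ N₀ ∧
      (∀ x, nuca (fun _ : G => μ') (nuca (fun _ : G => c) x) = x) ∧
      (∀ y, nuca (fun _ : G => c) (nuca (fun _ : G => μ') y) = y) := by
  classical
  have hCLM : ∃ N : Finset G, ∀ x x' : G → A,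
      (∀ ν ∈ N, nuca (fun _ : G => c) x ν = nuca (fun _ : G => c) x' ν) → x 1 = x' 1 := by
    by_contra hno
    push_neg at hno
    choose X X' hXX hne using fun n => hno (E ^ n)
    set xs : G → A := fun h => ulim (Filter.hyperfilter ℕ) (fun n => X n h) with hxs
    set xs' : G → A := fun h => ulim (Filter.hyperfilter ℕ) (fun n => X' n h) with hxs'
    have heq : nuca (fun _ : G => c) xs = nuca (fun _ : G => c) xs' := by
      funext g
      rcases hgenE g with ⟨k, hk⟩
      have hmem : ({n | ∀ h ∈ M.image (g * ·), xs h = X n h} ∩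
          ({n | ∀ h ∈ M.image (g * ·), xs' h = X' n h} ∩ {n | k ≤ n})) ∈
            Filter.hyperfilter ℕ :=
        Filter.inter_mem (ulim_window _ X _)
          (Filter.inter_mem (ulim_window _ X' _) (tail_mem_hyper k))
      rcases Ultrafilter.nonempty_of_mem hmem with ⟨n, h1, h2, h3⟩
      have e1 : nuca (fun _ : G => c) xs g = nuca (fun _ : G => c) (X n) g :=
        nuca_congr (fun m hm => h1 _ (Finset.mem_image_of_mem _ hm))
      have e2 : nuca (fun _ : G => c) xs' g = nuca (fun _ : G => c) (X' n) g :=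
        nuca_congr (fun m hm => h2 _ (Finset.mem_image_of_mem _ hm))
      rw [e1, e2]
      exact hXX n g (Finset.pow_subset_pow_right h1E h3 hk)
    have hxx := hinj heq
    have hmem : ({n | ∀ h ∈ ({1} : Finset G), xs h = X n h} ∩
        {n | ∀ h ∈ ({1} : Finset G), xs' h = X' n h}) ∈ Filter.hyperfilter ℕ :=
      Filter.inter_mem (ulim_window _ X _) (ulim_window _ X' _)
    rcases Ultrafilter.nonempty_of_mem hmem with ⟨n, h1, h2⟩
    apply hne n
    rw [← h1 1 (Finset.mem_singleton_self 1), ← h2 1 (Finset.mem_singleton_self 1), hxx]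
  rcases hCLM with ⟨N, hN⟩
  set N₀ : Finset G := N ∪ {1} with hN₀def
  have hCLM' : ∀ x x' : G → A,
      (∀ ν ∈ N₀, nuca (fun _ : G => c) x ν = nuca (fun _ : G => c) x' ν) → x 1 = x' 1 :=
    fun x x' h => hN x x' (fun ν hν => h ν (Finset.mem_union_left _ hν))
  set μ' : (N₀ → A) → A := fun u =>
    if h : ∃ x : G → A, ∀ ν : N₀, nuca (fun _ : G => c) x ↑ν = u ν
    then Classical.choose h 1 else a₀ with hμ'
  have hshconst : ∀ γ : G, shf γ (fun _ : G => c) = (fun _ : G => c) := fun γ => rfl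
  have hLINV : ∀ x, nuca (fun _ : G => μ') (nuca (fun _ : G => c) x) = x := by
    intro x
    funext g
    have hconj : nuca (fun _ : G => c) (shf g⁻¹ x) = shf g⁻¹ (nuca (fun _ : G => c) x) := by
      have := nuca_shf (fun _ : G => c) g⁻¹ x
      rwa [hshconst] at this
    have hex : ∃ z : G → A, ∀ ν : N₀,
        nuca (fun _ : G => c) z ↑ν = nuca (fun _ : G => c) x (g * ↑ν) := by
      refine ⟨shf g⁻¹ x, fun ν => ?_⟩
      rw [hconj]
      simp [shf]
    have : nuca (fun _ : G => μ') (nuca (fun _ : G => c) x) g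
        = μ' (fun ν => nuca (fun _ : G => c) x (g * ↑ν)) := rfl
    have hval : μ' (fun ν => nuca (fun _ : G => c) x (g * ↑ν)) = Classical.choose hex 1 :=
      dif_pos hex
    rw [this, hval]
    have hch := Classical.choose_spec hex
    have h13 : Classical.choose hex 1 = (shf g⁻¹ x) 1 := by
      apply hCLM'
      intro ν hν
      rw [hch ⟨ν, hν⟩, hconj]
      simp [shf]
    rw [h13]
    simp [shf]
  refine ⟨N₀, μ', Finset.mem_union_right _ (Finset.mem_singleton_self 1), hLINV, ?_⟩
  intro y
  rcases hsurj y with ⟨x, rfl⟩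
  rw [hLINV x]

end CAc

section MainPreinj

variable {G A : Type*} [Group G] [Fintype A] [DecidableEq G] {M : Finset G}
variable (s : G → ((M → A) → A))

lemma preinj_s (c : (M → A) → A)
    (hshell : ∀ W B : Finset G, ∃ F : Finset G, W ⊆ F ∧ (1:G) ∈ F ∧
      ∀ g ∈ F * B, g ∉ F → s g = c)
    {N₀ : Finset G} (μ' : (N₀ → A) → A)
    (hLINV : ∀ x : G → A, nuca (fun _ : G => μ') (nuca (fun _ : G => c) x) = x)
    (hRINV : ∀ y : G → A, nuca (fun _ : G => c) (nuca (fun _ : G => μ') y) = y)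
    {V : Finset G}
    (hV : ∀ p ∈ orbitClosure s, ∀ x y : G → A,
      (∀ g : G, g ≠ 1 → y g = nuca p x g) →
      ∃ z, (∀ g, g ∉ V → z g = x g) ∧ nuca p z = y) :
    PreInjective (nuca s) := by
  intro x x' hasym heq
  by_contra hne
  obtain ⟨d₀, hd₀⟩ := Function.ne_iff.mp hne
  obtain ⟨D, hD⟩ := hasym
  -- the big symmetric window K
  set K₁ : Finset G := M ∪ N₀ ∪ V ∪ D with hK₁
  set K : Finset G := K₁ ∪ K₁.image (·⁻¹) ∪ {1} with hK
  have h1K : (1:G) ∈ K := by simp [hK]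
  have hK₁K : K₁ ⊆ K := fun g hg => by simp [hK, hg]
  have hsymK : ∀ g ∈ K, g⁻¹ ∈ K := by
    intro g hg
    simp only [hK, Finset.mem_union, Finset.mem_image, Finset.mem_singleton] at hg ⊢
    rcases hg with (h | ⟨a, ha, rfl⟩) | rfl
    · exact Or.inl (Or.inr ⟨g, h, rfl⟩)
    · simp [ha]
    · simp
  have hMK : M ⊆ K := fun g hg => hK₁K (by simp [hK₁, hg])
  have hNK : N₀ ⊆ K := fun g hg => hK₁K (by simp [hK₁, hg])
  have hVK : V ⊆ K := fun g hg => hK₁K (by simp [hK₁, hg])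
  have hDK : D ⊆ K := fun g hg => hK₁K (by simp [hK₁, hg])
  set Minv : Finset G := M.image (·⁻¹) with hMinv
  have hMinvK : Minv ⊆ K := by
    intro g hg
    rcases Finset.mem_image.mp hg with ⟨m, hm, rfl⟩
    exact hsymK m (hMK hm)
  -- the shell
  obtain ⟨F, hWF, h1F, hshellF⟩ := hshell (D ∪ D * Minv) (K ^ 24)
  have hpowmono : ∀ {i j : ℕ}, i ≤ j → F * K ^ i ⊆ F * K ^ j := fun hij =>
    Finset.mul_subset_mul_left (Finset.pow_subset_pow_right h1K hij)
  have hFsub : ∀ j : ℕ, F ⊆ F * K ^ j := fun j g hg => by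
    simpa using Finset.mul_mem_mul hg (Finset.one_mem_pow (n := j) h1K)
  have hstep : ∀ {j : ℕ} {g k : G}, g ∈ F * K ^ j → k ∈ K → g * k ∈ F * K ^ (j+1) := by
    intro j g k hg hk
    rw [pow_succ, ← mul_assoc]
    exact Finset.mul_mem_mul hg hk
  have hback : ∀ {j : ℕ} {g k : G}, g * k ∈ F * K ^ j → k ∈ K → g ∈ F * K ^ (j+1) := by
    intro j g k hg hk
    have := hstep hg (hsymK k hk)
    simpa using this
  -- the truncated configuration of local rules
  set sh : G → ((M → A) → A) := fun g => if g ∈ F * K ^ 12 then s g else c with hsh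
  have fact1 : ∀ g ∈ F * K ^ 24, sh g = s g := by
    intro g hg
    by_cases hR : g ∈ F * K ^ 12
    · simp [hsh, hR]
    · have hnF : g ∉ F := fun h => hR (hFsub 12 h)
      rw [hsh]
      simp only [if_neg hR]
      exact (hshellF g hg hnF).symm
  have fact2 : ∀ g, g ∉ F * K ^ 12 → sh g = c := fun g h => if_neg h
  have hsOC := self_mem_orbitClosure s
  -- single point corrections for nuca sh, deep inside
  have hSP : ∀ h ∈ F * K ^ 19, ∀ xh yh : G → A,
      (∀ g : G, g ≠ h → yh g = nuca sh xh g) →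
      ∃ z, (∀ g, g ∉ V.image (h * ·) → z g = xh g) ∧ nuca sh z = yh := by
    intro h hh xh yh hyh
    set y' : G → A := fun g => if g = h then yh h else nuca s xh g with hy'def
    have hy' : ∀ g : G, g ≠ h → y' g = nuca s xh g := fun g hg => if_neg hg
    obtain ⟨z, hzsupp, hz⟩ := ups_pt s hV s hsOC h xh y' hy'
    refine ⟨z, hzsupp, ?_⟩
    funext g
    by_cases hg24 : g ∈ F * K ^ 24
    · have hrule : sh g = s g := fact1 g hg24
      have e1 : nuca sh z g = nuca s z g := by unfold nuca; rw [hrule]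
      rw [e1, hz]
      by_cases hgh : g = h
      · subst hgh; simp [hy'def]
      · rw [hy'def]
        simp only [if_neg hgh]
        have e2 : nuca sh xh g = nuca s xh g := by unfold nuca; rw [hrule]
        rw [← e2]
        exact (hyh g hgh).symm
    · have hwin : ∀ m ∈ M, z (g * m) = xh (g * m) := by
        intro m hm
        apply hzsupp
        intro hc
        rcases Finset.mem_image.mp hc with ⟨v, hv, hev⟩
        apply hg24
        have h1 : h * v ∈ F * K ^ 20 := hstep (hpowmono (by norm_num) hh) (hVK hv)
        have h2 : g ∈ F * K ^ 21 := by
          have : (h * v) * m⁻¹ = g := by rw [hev]; group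
          rw [← this]
          exact hstep h1 (hsymK m (hMK hm))
        exact hpowmono (by norm_num) h2
      have e1 : nuca sh z g = nuca sh xh g := nuca_congr hwin
      have hgh : g ≠ h := fun hc => hg24 (hc ▸ hpowmono (by norm_num) hh)
      rw [e1, ← hyh g hgh]
  -- iterated corrections
  have hITER : ∀ Ω : Finset G, Ω ⊆ F * K ^ 19 → ∀ xh yh : G → A,
      (∀ g, g ∉ Ω → yh g = nuca sh xh g) → ∃ z, nuca sh z = yh := by
    intro Ω
    induction Ω using Finset.induction with
    | empty =>
        intro _ xh yh hy
        exact ⟨xh, by funext g; exact (hy g (by simp)).symm⟩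
    | @insert a Ω ha ih =>
        intro hsub xh yh hy
        have hsubΩ : Ω ⊆ F * K ^ 19 := fun g hg => hsub (Finset.mem_insert_of_mem hg)
        have haF : a ∈ F * K ^ 19 := hsub (Finset.mem_insert_self a Ω)
        set y' : G → A := fun g => if g = a then nuca sh xh g else yh g with hy'def
        have hy' : ∀ g, g ∉ Ω → y' g = nuca sh xh g := by
          intro g hg
          by_cases hga : g = a
          · simp [hy'def, hga]
          · simp only [hy'def, if_neg hga]
            exact hy g (by simp [hga, hg])
        obtain ⟨z₁, hz₁⟩ := ih hsubΩ xh y' hy'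
        have hy2 : ∀ g : G, g ≠ a → yh g = nuca sh z₁ g := by
          intro g hg
          rw [hz₁]
          simp [hy'def, hg]
        obtain ⟨z, _, hz⟩ := hSP a haF z₁ yh hy2
        exact ⟨z, hz⟩
  -- the violation transfers to the truncated NUCA
  have himg : nuca sh x = nuca sh x' := by
    funext h
    by_cases hh : h ∈ D * Minv
    · have hF : h ∈ F := hWF (Finset.mem_union_right _ hh)
      have hrule : sh h = s h := fact1 h (hFsub 24 hF)
      have e1 : nuca sh x h = nuca s x h := by unfold nuca; rw [hrule]
      have e2 : nuca sh x' h = nuca s x' h := by unfold nuca; rw [hrule]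
      rw [e1, e2, heq]
    · refine nuca_congr (fun m hm => ?_)
      apply hD
      intro hc
      exact hh (Finset.mem_mul.mpr ⟨h * m, hc, m⁻¹, Finset.mem_image_of_mem _ hm, by group⟩)
  -- the locally perturbed "identity" map
  set Φ : (G → A) → (G → A) := fun z => nuca (fun _ : G => μ') (nuca sh z) with hΦ
  have P1 : ∀ (z : G → A) (g : G), g ∉ F * K ^ 13 → Φ z g = z g := by
    intro z g hg
    have hrule : ∀ ν ∈ N₀, nuca sh z (g * ν) = nuca (fun _ : G => c) z (g * ν) := by
      intro ν hν
      have hnot : g * ν ∉ F * K ^ 12 := fun hc => hg (hback hc (hNK hν))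
      unfold nuca
      rw [fact2 _ hnot]
    calc Φ z g = μ' (fun ν => nuca sh z (g * ↑ν)) := rfl
      _ = μ' (fun ν => nuca (fun _ : G => c) z (g * ↑ν)) := by
          congr 1; funext ν; exact hrule ν ν.2
      _ = nuca (fun _ : G => μ') (nuca (fun _ : G => c) z) g := rfl
      _ = z g := congrFun (hLINV z) g
  set Q : Finset G := F * K ^ 16 with hQ
  -- realizing arbitrary patterns on Q in the image of Φ
  have hsurjT : ∀ ψ : G → A, ∃ z, Φ z = fun g => if g ∈ Q then ψ g else Φ x g := by
    intro ψ
    set yψ : G → A := fun g => if g ∈ Q then ψ g else Φ x g with hyψ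
    set ytil : G → A := nuca (fun _ : G => c) yψ with hytil
    have hdel : ∀ g, g ∉ Q * Minv → ytil g = nuca sh x g := by
      intro g hg
      have hwin : ∀ m ∈ M, yψ (g * m) = Φ x (g * m) := by
        intro m hm
        refine if_neg ?_
        intro hc
        exact hg (Finset.mem_mul.mpr ⟨g * m, hc, m⁻¹, Finset.mem_image_of_mem _ hm, by group⟩)
      calc ytil g = nuca (fun _ : G => c) (Φ x) g := nuca_congr hwin
        _ = nuca sh x g := congrFun (hRINV (nuca sh x)) g
    have hsubQM : Q * Minv ⊆ F * K ^ 19 := by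
      intro g hg
      rcases Finset.mem_mul.mp hg with ⟨q, hq, mi, hmi, rfl⟩
      exact hpowmono (by norm_num) (hstep hq (hMinvK hmi))
    obtain ⟨z, hz⟩ := hITER (Q * Minv) hsubQM x ytil hdel
    refine ⟨z, ?_⟩
    show nuca (fun _ : G => μ') (nuca sh z) = yψ
    rw [hz]
    exact hLINV yψ
  -- pigeonhole on patterns over Q
  set glue : (Q → A) → (G → A) := fun φ g => if h : g ∈ Q then φ ⟨g, h⟩ else x g with hglue
  set T : (Q → A) → (Q → A) := fun φ q => Φ (glue φ) ↑q with hT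
  have hTsurj : Function.Surjective T := by
    intro ψ0
    set ψ : G → A := fun g => if h : g ∈ Q then ψ0 ⟨g, h⟩ else x g with hψ
    obtain ⟨z, hz⟩ := hsurjT ψ
    have hzoff : ∀ g, g ∉ Q → z g = x g := by
      intro g hg
      have h13 : g ∉ F * K ^ 13 := fun hc => hg (hpowmono (by norm_num) hc)
      calc z g = Φ z g := (P1 z g h13).symm
        _ = (fun g => if g ∈ Q then ψ g else Φ x g) g := congrFun hz g
        _ = Φ x g := if_neg hg
        _ = x g := P1 x g h13
    refine ⟨fun q => z ↑q, ?_⟩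
    funext q
    have hgluez : glue (fun q => z ↑q) = z := by
      funext g
      by_cases hg : g ∈ Q
      · simp [hglue, hg]
      · simp [hglue, hg, hzoff g hg]
    show Φ (glue (fun q => z ↑q)) ↑q = ψ0 q
    rw [hgluez, congrFun hz ↑q, if_pos q.2]
    simp [hψ, q.2]
  have hTinj : Function.Injective T := Finite.injective_iff_surjective.mpr hTsurj
  have hgx : glue (fun q => x ↑q) = x := by
    funext g
    by_cases hg : g ∈ Q <;> simp [hglue, hg]
  have hDF : D ⊆ F := fun g hg => hWF (Finset.mem_union_left _ hg)
  have hgx' : glue (fun q => x' ↑q) = x' := by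
    funext g
    by_cases hg : g ∈ Q
    · simp [hglue, hg]
    · simp only [hglue, dif_neg hg]
      exact hD g (fun hc => hg (hFsub 16 (hDF hc)))
  have hTeq : T (fun q => x ↑q) = T (fun q => x' ↑q) := by
    funext q
    show Φ (glue fun q => x ↑q) ↑q = Φ (glue fun q => x' ↑q) ↑q
    rw [hgx, hgx']
    show nuca (fun _ : G => μ') (nuca sh x) ↑q = nuca (fun _ : G => μ') (nuca sh x') ↑q
    rw [himg]
  have hxx' : (fun q : Q => x ↑q) = (fun q : Q => x' ↑q) := hTinj hTeq
  have hd₀D : d₀ ∈ D := by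
    by_contra hc
    exact hd₀ (hD d₀ hc)
  have hd₀Q : d₀ ∈ Q := hFsub 16 (hDF hd₀D)
  exact hd₀ (congrFun hxx' ⟨d₀, hd₀Q⟩)

end MainPreinj

section Unif

variable {G A : Type*} [Group G] [Fintype A] [DecidableEq G] {M : Finset G}
variable (s : G → ((M → A) → A))

lemma unif {E : Finset G} (h1E : (1:G) ∈ E) (hgenE : ∀ g : G, ∃ n, g ∈ E ^ n)
    (hinj : ∀ p ∈ orbitClosure s, Function.Injective (nuca p)) :
    ∃ N : Finset G, ∀ p ∈ orbitClosure s, ∀ (g : G) (x x' : G → A),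
      (∀ ν ∈ N, nuca p x (g * ν) = nuca p x' (g * ν)) → x g = x' g := by
  have hbase : ∃ N : Finset G, ∀ p ∈ orbitClosure s, ∀ x x' : G → A,
      (∀ ν ∈ N, nuca p x ν = nuca p x' ν) → x 1 = x' 1 := by
    by_contra hno
    push_neg at hno
    choose P hP X X' hagree hne using fun n => hno (E ^ n)
    set ps : G → ((M → A) → A) := fun h => ulim (Filter.hyperfilter ℕ) (fun n => P n h) with hps
    set xs : G → A := fun h => ulim (Filter.hyperfilter ℕ) (fun n => X n h) with hxs
    set xs' : G → A := fun h => ulim (Filter.hyperfilter ℕ) (fun n => X' n h) with hxs'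
    have hpsOC : ps ∈ orbitClosure s := by
      rw [mem_orbitClosure_iff]
      intro W
      rcases Ultrafilter.nonempty_of_mem (ulim_window (Filter.hyperfilter ℕ) P W) with ⟨n, hn⟩
      rcases (mem_orbitClosure_iff s (P n)).mp (hP n) W with ⟨g, hg⟩
      exact ⟨g, fun h hh => by rw [← hg h hh]; exact hn h hh⟩
    have heq : nuca ps xs = nuca ps xs' := by
      funext g
      rcases hgenE g with ⟨k, hk⟩
      have hmem : ({n | ∀ h ∈ ({g} : Finset G), ps h = P n h} ∩
          ({n | ∀ h ∈ M.image (g * ·), xs h = X n h} ∩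
          ({n | ∀ h ∈ M.image (g * ·), xs' h = X' n h} ∩ {n | k ≤ n}))) ∈
            Filter.hyperfilter ℕ :=
        Filter.inter_mem (ulim_window _ P _)
          (Filter.inter_mem (ulim_window _ X _)
            (Filter.inter_mem (ulim_window _ X' _) (tail_mem_hyper k)))
      rcases Ultrafilter.nonempty_of_mem hmem with ⟨n, h1, h2, h3, h4⟩
      have e1 : nuca ps xs g = nuca (P n) (X n) g := by
        unfold nuca
        rw [h1 g (Finset.mem_singleton_self g)]
        congr 1
        funext m
        exact h2 _ (Finset.mem_image_of_mem _ m.2)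
      have e2 : nuca ps xs' g = nuca (P n) (X' n) g := by
        unfold nuca
        rw [h1 g (Finset.mem_singleton_self g)]
        congr 1
        funext m
        exact h3 _ (Finset.mem_image_of_mem _ m.2)
      rw [e1, e2]
      exact hagree n g (Finset.pow_subset_pow_right h1E h4 hk)
    have hxx := hinj ps hpsOC heq
    have hmem : ({n | ∀ h ∈ ({1} : Finset G), xs h = X n h} ∩
        {n | ∀ h ∈ ({1} : Finset G), xs' h = X' n h}) ∈ Filter.hyperfilter ℕ :=
      Filter.inter_mem (ulim_window _ X _) (ulim_window _ X' _)
    rcases Ultrafilter.nonempty_of_mem hmem with ⟨n, h1, h2⟩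
    apply hne n
    rw [← h1 1 (Finset.mem_singleton_self 1), ← h2 1 (Finset.mem_singleton_self 1), hxx]
  rcases hbase with ⟨N, hN⟩
  refine ⟨N, ?_⟩
  intro p hp g x x' hag
  have hpOC := shf_mem_orbitClosure hp g⁻¹
  have key : ∀ ν ∈ N, nuca (shf g⁻¹ p) (shf g⁻¹ x) ν = nuca (shf g⁻¹ p) (shf g⁻¹ x') ν := by
    intro ν hν
    rw [nuca_shf, nuca_shf]
    simpa [shf] using hag ν hν
  have := hN (shf g⁻¹ p) hpOC _ _ key
  simpa [shf] using this

end Unif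

section Assemble

theorem theoremD' {G : Type*} [Group G] [Group.FG G] (hG : PostInjunctive G)
    {A : Type*} [Fintype A] {M : Finset G} (s : G → ((M → A) → A))
    (hubs : UniformlyBoundedSingularity s) (hpost : StablyPostSurjective s) :
    StablyInvertible s := by
  classical
  by_cases hsub : Subsingleton (G → A)
  · exact ⟨M, s, fun p hp => ⟨p, hp, funext fun x => Subsingleton.elim _ _,
      funext fun x => Subsingleton.elim _ _⟩⟩
  have hntA : Nontrivial A := by
    by_contra hA
    rw [not_nontrivial_iff_subsingleton] at hA
    exact hsub ⟨fun x y => funext fun g => Subsingleton.elim _ _⟩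
  obtain ⟨a₀⟩ : Nonempty A := inferInstance
  have hsOC := self_mem_orbitClosure s
  have hpost' : ∀ p ∈ orbitClosure s, PostSurjective (nuca p) := hpost
  -- M is nonempty
  have hMne : M.Nonempty := by
    by_contra hMne
    rw [Finset.not_nonempty_iff_eq_empty] at hMne
    have hval : ∀ x x' : G → A, nuca s x = nuca s x' := by
      intro x x'
      funext g
      unfold nuca
      congr 1
      funext m
      exact absurd m.2 (by simp [hMne])
    obtain ⟨b, hb⟩ := exists_ne (nuca s (fun _ => a₀) 1)
    have hasym : Asymptotic (Function.update (nuca s (fun _ => a₀)) 1 b)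
        (nuca s (fun _ => a₀)) :=
      ⟨{1}, fun g hg => Function.update_of_ne (by simpa using hg) _ _⟩
    obtain ⟨z, _, hz⟩ := hpost' s hsOC (fun _ => a₀) _ hasym
    have h2 : nuca s z = nuca s (fun _ => a₀) := hval z _
    rw [hz] at h2
    have := congrFun h2 1
    rw [Function.update_self] at this
    exact hb this
  obtain ⟨E, h1E, hsymE, hgenE⟩ := exists_sym_gen G
  cases finite_or_infinite G with
  | inl hfin =>
      haveI := Fintype.ofFinite G
      have hsurj : Function.Surjective (nuca s) := by
        intro y
        obtain ⟨z, _, hz⟩ := hpost' s hsOC (fun _ => a₀) y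
          ⟨Finset.univ, fun g hg => absurd (Finset.mem_univ g) hg⟩
        exact ⟨z, hz⟩
      have hinj : Function.Injective (nuca s) := Finite.injective_iff_surjective.mpr hsurj
      haveI : Nonempty (G → A) := ⟨fun _ => a₀⟩
      set Φ : (G → A) → (G → A) := Function.invFun (nuca s) with hΦ
      have hΦl : Function.LeftInverse Φ (nuca s) := Function.leftInverse_invFun hinj
      have hΦr : Function.RightInverse Φ (nuca s) := Function.rightInverse_invFun hsurj
      set Nu : Finset G := Finset.univ with hNu
      set t : G → ((Nu → A) → A) :=
        fun g u => Φ (fun h => u ⟨g⁻¹ * h, hNu ▸ Finset.mem_univ _⟩) g with ht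
      have hteq : ∀ y, nuca t y = Φ y := by
        intro y
        funext g
        show Φ (fun h => y (g * (g⁻¹ * h))) g = Φ y g
        have : (fun h => y (g * (g⁻¹ * h))) = y := by
          funext h
          rw [mul_inv_cancel_left]
        rw [this]
      have hts : ∀ x, nuca t (nuca s x) = x := fun x => by rw [hteq]; exact hΦl x
      have hst : ∀ y, nuca s (nuca t y) = y := fun y => by rw [hteq]; exact hΦr y
      refine ⟨Nu, t, ?_⟩
      intro p hp
      rcases (mem_orbitClosure_iff s p).mp hp Finset.univ with ⟨g, hg⟩
      have hpeq : p = shf g s := funext fun h => hg h (Finset.mem_univ h)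
      refine ⟨shf g t, orbit_mem_orbitClosure t g, ?_, ?_⟩
      · funext x
        simp only [Function.comp_apply, id_eq]
        rw [hpeq]
        exact comp_conj s t hst g x
      · funext x
        simp only [Function.comp_apply, id_eq]
        rw [hpeq]
        exact comp_conj t s hts g x
  | inr hinf =>
      obtain ⟨c, hcOC, hshell⟩ := exists_good_const s h1E hsymE hgenE hubs
      have hpsc : PostSurjective (nuca (fun _ : G => c)) := hpost' _ hcOC
      have hprec : PreInjective (nuca (fun _ : G => c)) := ca_preinj hG c hpsc
      obtain ⟨V, hV⟩ := ups s h1E hgenE hpost' hMne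
      have hinjc : Function.Injective (nuca (fun _ : G => c)) :=
        inj_of_preinj s hV _ hcOC hprec
      have hsurjc : Function.Surjective (nuca (fun _ : G => c)) :=
        surj_of_postsurj h1E hgenE _ hpsc (fun _ => a₀)
      obtain ⟨N₀, μ', h1N₀, hLINV, hRINV⟩ :=
        exists_inverse_ca h1E hgenE c hinjc hsurjc a₀
      have hpres : PreInjective (nuca s) := preinj_s s c hshell μ' hLINV hRINV hV
      have hpreall := preinj_all s hpres
      have hinjall : ∀ p ∈ orbitClosure s, Function.Injective (nuca p) :=
        fun p hp => inj_of_preinj s hV p hp (hpreall p hp)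
      obtain ⟨N, hN⟩ := unif s h1E hgenE hinjall
      have hsurjs : Function.Surjective (nuca s) :=
        surj_of_postsurj h1E hgenE s (hpost' s hsOC) (fun _ => a₀)
      set t : G → ((N → A) → A) := fun g u =>
        if h : ∃ x : G → A, ∀ ν : N, nuca s x (g * ↑ν) = u ν
        then Classical.choose h g else a₀ with htdef
      have hts : ∀ x, nuca t (nuca s x) = x := by
        intro x
        funext g
        have hex : ∃ z : G → A, ∀ ν : N,
            nuca s z (g * ↑ν) = (fun ν : N => nuca s x (g * ↑ν)) ν := ⟨x, fun ν => rfl⟩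
        have hval : nuca t (nuca s x) g = Classical.choose hex g := by
          show t g (fun ν => nuca s x (g * ↑ν)) = _
          rw [htdef]
          exact dif_pos hex
        rw [hval]
        have hch := Classical.choose_spec hex
        exact hN s hsOC g _ _ (fun ν hν => hch ⟨ν, hν⟩)
      have hst : ∀ y, nuca s (nuca t y) = y := by
        intro y
        rcases hsurjs y with ⟨x, rfl⟩
        rw [hts]
      refine ⟨N, t, ?_⟩
      intro p hp
      have hmatch : ∀ n : ℕ, ∃ g : G, ∀ h ∈ E ^ n, p h = s (g⁻¹ * h) :=
        fun n => (mem_orbitClosure_iff s p).mp hp (E ^ n)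
      choose gs hgs using hmatch
      set q : G → ((N → A) → A) :=
        fun h => ulim (Filter.hyperfilter ℕ) (fun n => shf (gs n) t h) with hq
      have hqOC : q ∈ orbitClosure t := by
        rw [mem_orbitClosure_iff]
        intro W
        rcases Ultrafilter.nonempty_of_mem
          (ulim_window (Filter.hyperfilter ℕ) (fun n => shf (gs n) t) W) with ⟨n, hn⟩
        exact ⟨gs n, fun h hh => hn h hh⟩
      refine ⟨q, hqOC, ?_, ?_⟩
      · funext x
        simp only [Function.comp_apply, id_eq]
        funext g
        rcases hgenE g with ⟨k, hk⟩
        have hmem : ({n | ∀ h ∈ M.image (g * ·), q h = shf (gs n) t h} ∩ {n | k ≤ n}) ∈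
            Filter.hyperfilter ℕ :=
          Filter.inter_mem (ulim_window _ _ _) (tail_mem_hyper k)
        rcases Ultrafilter.nonempty_of_mem hmem with ⟨n, h1, h2⟩
        have hpg : p g = shf (gs n) s g :=
          hgs n g (Finset.pow_subset_pow_right h1E h2 hk)
        have e1 : nuca p (nuca q x) g = nuca (shf (gs n) s) (nuca (shf (gs n) t) x) g := by
          show p g (fun m => nuca q x (g * ↑m)) =
            (shf (gs n) s) g (fun m => nuca (shf (gs n) t) x (g * ↑m))
          rw [hpg]
          refine congrArg _ (funext fun m => ?_)
          show q (g * ↑m) (fun ν => x ((g * ↑m) * ↑ν)) =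
            (shf (gs n) t) (g * ↑m) (fun ν => x ((g * ↑m) * ↑ν))
          rw [h1 (g * ↑m) (Finset.mem_image_of_mem _ m.2)]
        rw [e1]
        exact congrFun (comp_conj s t hst (gs n) x) g
      · funext x
        simp only [Function.comp_apply, id_eq]
        funext g
        rcases subset_pow h1E hgenE (insert g (N.image (g * ·))) with ⟨k, hk⟩
        have hmem : ({n | ∀ h ∈ ({g} : Finset G), q h = shf (gs n) t h} ∩ {n | k ≤ n}) ∈
            Filter.hyperfilter ℕ :=
          Filter.inter_mem (ulim_window _ _ _) (tail_mem_hyper k)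
        rcases Ultrafilter.nonempty_of_mem hmem with ⟨n, h1, h2⟩
        have hqg : q g = shf (gs n) t g := h1 g (Finset.mem_singleton_self g)
        have hpg : ∀ ν ∈ N, p (g * ν) = shf (gs n) s (g * ν) := by
          intro ν hν
          exact hgs n (g * ν) (Finset.pow_subset_pow_right h1E h2
            (hk (Finset.mem_insert_of_mem (Finset.mem_image_of_mem _ hν))))
        have e1 : nuca q (nuca p x) g = nuca (shf (gs n) t) (nuca (shf (gs n) s) x) g := by
          show q g (fun ν => nuca p x (g * ↑ν)) =
            (shf (gs n) t) g (fun ν => nuca (shf (gs n) s) x (g * ↑ν))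
          rw [hqg]
          refine congrArg _ (funext fun ν => ?_)
          show p (g * ↑ν) (fun m => x ((g * ↑ν) * ↑m)) =
            (shf (gs n) s) (g * ↑ν) (fun m => x ((g * ↑ν) * ↑m))
          rw [hpg ↑ν ν.2]
        rw [e1]
        exact congrFun (comp_conj t s hts (gs n) x) g

end Assemble


/-- Theorem D: over a finitely generated post-injunctive group
universe and a finite alphabet, every stably post-surjective NUCA with finite
memory whose configuration of local defining maps has uniformly bounded
singularity is stably invertible. -/
theorem theoremD {G : Type*} [Group G] [Group.FG G] (hG : PostInjunctive G)
    {A : Type*} [Fintype A] {M : Finset G} (s : G → ((M → A) → A))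
    (hubs : UniformlyBoundedSingularity s) (hpost : StablyPostSurjective s) :
    StablyInvertible s := by
  exact theoremD' hG s hubs hpost
end

section
/- Let G be a countable group and let A be a finite-dimensional vector space over a finite field (so A is a finite vector space alphabet). Then the following two statements are equivalent: (1) for every finite subset M ⊆ G and every configuration s ∈ S^G of linear local defining maps (S the set of linear maps A^M → A) with uniformly bounded singularity, if the linear NUCA σ_s is stably injective then σ_s is stably invertible; (2) for every finite subset M ⊆ G and every configuration s ∈ S^G of linear local defining maps with uniformly bounded singularity, if the linear NUCA σ_s is stably post-surjective then σ_s is stably invertible. -/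
open Function Set Pointwise

section Linear

variable {G : Type*} [Group G] {K : Type*} [Field K]
  {A : Type*} [AddCommGroup A] [Module K A]

/-- The linear NUCA `σ_s` determined by a configuration `s` of linear local
defining maps. -/
def nucaL {M : Finset G} (s : G → ((M → A) →ₗ[K] A)) : (G → A) → (G → A) :=
  fun x g => s g fun m => x (g * (m : G))

/-- A linear NUCA is stably injective if `σ_p` is injective for all `p ∈ Σ(s)`. -/
def StablyInjectiveL {M : Finset G} (s : G → ((M → A) →ₗ[K] A)) : Prop :=
  ∀ p ∈ orbitClosure s, Function.Injective (nucaL p)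

/-- A linear NUCA is stably post-surjective if `σ_p` is post-surjective for all
`p ∈ Σ(s)`. -/
def StablyPostSurjectiveL {M : Finset G} (s : G → ((M → A) →ₗ[K] A)) : Prop :=
  ∀ p ∈ orbitClosure s, PostSurjective (nucaL p)

/-- A linear NUCA is stably invertible. -/
def StablyInvertibleL {M : Finset G} (s : G → ((M → A) →ₗ[K] A)) : Prop :=
  ∃ (N : Finset G) (t : G → ((N → A) → A)),
    ∀ p ∈ orbitClosure s, ∃ q ∈ orbitClosure t,
      nucaL p ∘ nuca q = id ∧ nuca q ∘ nucaL p = id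

end Linear

open scoped Classical
open Topology
set_option linter.unusedSectionVars false
set_option maxHeartbeats 1000000

noncomputable section Aux

namespace NUCAProof

variable {G : Type*} [Group G]

/-! ### shift basics -/

def shiftc {S : Type*} (g : G) (s : G → S) : G → S := fun h => s (g⁻¹ * h)

variable {S S' : Type*}

lemma orbit_set_eq (s : G → S) :
    {p : G → S | ∃ g : G, p = fun h => s (g⁻¹ * h)} = Set.range (fun g => shiftc g s) := by
  ext p
  constructor
  · rintro ⟨g, rfl⟩; exact ⟨g, rfl⟩
  · rintro ⟨g, rfl⟩; exact ⟨g, rfl⟩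

lemma self_mem_orbitClosure (s : G → S) : s ∈ orbitClosure s := by
  letI : TopologicalSpace S := ⊥
  apply subset_closure
  exact ⟨1, by funext h; simp⟩

lemma shift_mem_orbitClosure (g : G) (s : G → S) : shiftc g s ∈ orbitClosure s := by
  letI : TopologicalSpace S := ⊥
  exact subset_closure ⟨g, rfl⟩

lemma theta_image_orbitClosure [Finite S] [Finite S'] (Θ : (G → S) → (G → S'))
    (hcont : Continuous[@Pi.topologicalSpace G (fun _ => S) fun _ => ⊥,
      @Pi.topologicalSpace G (fun _ => S') fun _ => ⊥] Θ)
    (hequiv : ∀ g s, Θ (shiftc g s) = shiftc g (Θ s)) (s : G → S) :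
    Θ '' orbitClosure s = orbitClosure (Θ s) := by
  letI : TopologicalSpace S := ⊥
  letI : TopologicalSpace S' := ⊥
  haveI : DiscreteTopology S := ⟨rfl⟩
  haveI : DiscreteTopology S' := ⟨rfl⟩
  have himg : Θ '' (Set.range fun g => shiftc g s) = Set.range (fun g => shiftc g (Θ s)) := by
    rw [← Set.range_comp]; simp only [Function.comp_def, hequiv]
  have hoc : orbitClosure s = closure (Set.range fun g => shiftc g s) := by
    rw [orbitClosure, orbit_set_eq]
  have hoc' : orbitClosure (Θ s) = closure (Set.range fun g => shiftc g (Θ s)) := by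
    rw [orbitClosure, orbit_set_eq]
  apply subset_antisymm
  · rw [hoc, hoc', ← himg]
    exact image_closure_subset_closure_image hcont
  · have hcomp : IsCompact (Θ '' orbitClosure s) := by
      have : IsCompact (orbitClosure s) := by
        rw [hoc]; exact isClosed_closure.isCompact
      exact this.image hcont
    rw [hoc', ← himg]
    refine closure_minimal (Set.image_mono (f := Θ) ?_) hcomp.isClosed
    rw [hoc]; exact subset_closure

/-- continuity criterion: each output coordinate depends on finitely many input coordinates -/
lemma continuous_of_local [Finite S] [Finite S'] (Θ : (G → S) → (G → S'))
    (hloc : ∀ h : G, ∃ (F : Finset G) (φ : (F → S) → S'),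
      ∀ s, Θ s h = φ (fun f => s (f : G))) :
    Continuous[@Pi.topologicalSpace G (fun _ => S) fun _ => ⊥,
      @Pi.topologicalSpace G (fun _ => S') fun _ => ⊥] Θ := by
  letI : TopologicalSpace S := ⊥
  letI : TopologicalSpace S' := ⊥
  haveI : DiscreteTopology S := ⟨rfl⟩
  haveI : DiscreteTopology S' := ⟨rfl⟩
  apply continuous_pi
  intro h
  obtain ⟨F, φ, hφ⟩ := hloc h
  have : (fun s : G → S => Θ s h) = φ ∘ (fun s => fun f : F => s (f : G)) := by
    funext s; exact hφ s
  rw [this]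
  exact (continuous_of_discreteTopology).comp (continuous_pi fun f => continuous_apply _)


/-! ### duality core -/

variable {K : Type*} [Field K] {A : Type*} [AddCommGroup A] [Module K A]

def Minv (M : Finset G) : Finset G := M.image (fun g => g⁻¹)

lemma mem_Minv {M : Finset G} {m : G} (hm : m ∈ M) : m⁻¹ ∈ Minv M := by
  simp only [Minv, Finset.mem_image]
  exact ⟨m, hm, rfl⟩

def minvElt {M : Finset G} (m : ↥M) : ↥(Minv M) := ⟨(m : G)⁻¹, mem_Minv m.2⟩

@[simp] lemma coe_minvElt {M : Finset G} (m : ↥M) : ((minvElt m : ↥(Minv M)) : G) = (m : G)⁻¹ := rfl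

/-- the dual configuration -/
def dualC {M : Finset G} (s : G → ((M → A) →ₗ[K] A)) :
    G → ((((Minv M : Finset G)) → Module.Dual K A) →ₗ[K] Module.Dual K A) :=
  fun h => ∑ m ∈ M.attach,
    (((s (h * (m : G)⁻¹)).comp (LinearMap.single K (fun _ : ↥M => A) m)).dualMap).comp
      (LinearMap.proj (minvElt m))

lemma dualC_apply {M : Finset G} (s : G → ((M → A) →ₗ[K] A)) (h : G)
    (v : ((Minv M : Finset G)) → Module.Dual K A) (a : A) :
    dualC s h v a = ∑ m ∈ M.attach, v (minvElt m) (s (h * (m : G)⁻¹) (Pi.single m a)) := by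
  simp [dualC, LinearMap.dualMap_apply]

lemma nucaL_dualC_apply {M : Finset G} (s : G → ((M → A) →ₗ[K] A)) (y : G → Module.Dual K A)
    (h : G) (a : A) :
    nucaL (dualC s) y h a
      = ∑ m ∈ M.attach, y (h * (m : G)⁻¹) (s (h * (m : G)⁻¹) (Pi.single m a)) := by
  show dualC s h (fun n : ↥(Minv M) => y (h * (n : G))) a = _
  rw [dualC_apply]
  simp only [coe_minvElt]

lemma nucaL_apply_eq_sum {M : Finset G} (p : G → ((M → A) →ₗ[K] A)) (x : G → A) (g : G) :
    nucaL p x g = ∑ m ∈ M.attach, p g (Pi.single m (x (g * (m : G)))) := by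
  show p g (fun m : ↥M => x (g * (m : G))) = _
  conv_lhs => rw [← Finset.univ_sum_single (fun m : ↥M => x (g * (m : G)))]
  rw [map_sum, Finset.univ_eq_attach]

/-- The fundamental duality identity. -/
lemma ident {M : Finset G} (p : G → ((M → A) →ₗ[K] A)) (x : G → A) (y : G → Module.Dual K A)
    (hfin : (Function.support y).Finite ∨ (Function.support x).Finite) :
    ∑ᶠ g, y g (nucaL p x g) = ∑ᶠ g, (nucaL (dualC p) y) g (x g) := by
  have hsupp1 : ∀ m : ↥M, (Function.support fun g => y g (p g (Pi.single m (x (g * (m : G)))))).Finite := by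
    intro m
    rcases hfin with hy | hx
    · exact hy.subset (fun g hg => by
        simp only [Function.mem_support] at hg ⊢
        intro h0; rw [h0] at hg; simpa using hg)
    · have : (Function.support fun g => y g (p g (Pi.single m (x (g * (m : G)))))) ⊆
          (fun z => z * (m : G)⁻¹) '' (Function.support x) := by
        intro g hg
        simp only [Function.mem_support] at hg
        refine ⟨g * (m : G), ?_, by group⟩
        intro h0
        rw [h0] at hg; simp at hg
      exact (hx.image _).subset this
  have hsupp2 : ∀ m : ↥M, (Function.support fun h => y (h * (m : G)⁻¹)
      (p (h * (m : G)⁻¹) (Pi.single m (x (h * (m : G)⁻¹ * (m : G)))))).Finite := by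
    intro m
    have := (hsupp1 m).image (fun z => z * (m : G))
    refine this.subset ?_
    intro h hh
    simp only [Function.mem_support] at hh
    exact ⟨h * (m : G)⁻¹, by simpa using hh, by group⟩
  calc ∑ᶠ g, y g (nucaL p x g)
      = ∑ᶠ g, ∑ m ∈ M.attach, y g (p g (Pi.single m (x (g * (m : G))))) := by
        apply finsum_congr; intro g
        rw [nucaL_apply_eq_sum, map_sum]
    _ = ∑ m ∈ M.attach, ∑ᶠ g, y g (p g (Pi.single m (x (g * (m : G))))) := by
        exact finsum_sum_comm _ _ (fun m _ => hsupp1 m)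
    _ = ∑ m ∈ M.attach, ∑ᶠ h, y (h * (m : G)⁻¹)
          (p (h * (m : G)⁻¹) (Pi.single m (x (h * (m : G)⁻¹ * (m : G))))) := by
        refine Finset.sum_congr rfl (fun m _ => ?_)
        exact (finsum_comp_equiv (Equiv.mulRight ((m : G))⁻¹)).symm
    _ = ∑ᶠ h, ∑ m ∈ M.attach, y (h * (m : G)⁻¹)
          (p (h * (m : G)⁻¹) (Pi.single m (x (h * (m : G)⁻¹ * (m : G))))) := by
        exact sum_finsum_comm _ _ (fun m _ => hsupp2 m)
    _ = ∑ᶠ h, (nucaL (dualC p) y) h (x h) := by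
        apply finsum_congr; intro h
        rw [nucaL_dualC_apply]
        refine Finset.sum_congr rfl (fun m _ => ?_)
        congr 2
        group



/-! ### algebra of nucaL, supports -/

lemma nucaL_zero {M : Finset G} (p : G → ((M → A) →ₗ[K] A)) : nucaL p (0 : G → A) = 0 := by
  funext g
  show p g (fun m : ↥M => (0 : G → A) (g * (m : G))) = 0
  convert map_zero (p g)
  rfl

lemma nucaL_sub {M : Finset G} (p : G → ((M → A) →ₗ[K] A)) (x y : G → A) :
    nucaL p (x - y) = nucaL p x - nucaL p y := by
  funext g
  show p g (fun m : ↥M => (x - y) (g * (m : G))) = _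
  have : (fun m : ↥M => (x - y) (g * (m : G)))
      = (fun m : ↥M => x (g * (m : G))) - (fun m : ↥M => y (g * (m : G))) := rfl
  rw [this, map_sub]
  rfl

lemma nucaL_add {M : Finset G} (p : G → ((M → A) →ₗ[K] A)) (x y : G → A) :
    nucaL p (x + y) = nucaL p x + nucaL p y := by
  funext g
  show p g (fun m : ↥M => (x + y) (g * (m : G))) = _
  have : (fun m : ↥M => (x + y) (g * (m : G)))
      = (fun m : ↥M => x (g * (m : G))) + (fun m : ↥M => y (g * (m : G))) := rfl
  rw [this, map_add]
  rfl

lemma support_nucaL_finite {M : Finset G} (p : G → ((M → A) →ₗ[K] A)) {x : G → A}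
    (hx : (Function.support x).Finite) : (Function.support (nucaL p x)).Finite := by
  have hsub : Function.support (nucaL p x)
      ⊆ ⋃ m ∈ M.attach, (fun z => z * (m : G)⁻¹) '' Function.support x := by
    intro g hg
    simp only [Function.mem_support] at hg
    by_contra hmem
    apply hg
    show p g (fun m : ↥M => x (g * (m : G))) = 0
    have hz : (fun m : ↥M => x (g * (m : G))) = 0 := by
      funext m
      by_contra hxm
      apply hmem
      refine Set.mem_biUnion (Finset.mem_attach _ m) ⟨g * (m : G), ?_, ?_⟩
      · simpa using hxm
      · exact mul_inv_cancel_right g _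
    rw [hz, map_zero]
  refine Set.Finite.subset ?_ hsub
  exact Set.Finite.biUnion (Finset.finite_toSet _) (fun m _ => hx.image _)

lemma supp_finite_of_asym_zero {x : G → A} (h : Asymptotic x 0) : (Function.support x).Finite := by
  obtain ⟨Ω, hΩ⟩ := h
  refine Set.Finite.subset Ω.finite_toSet ?_
  intro g hg
  by_contra hmem
  exact hg (hΩ g hmem)

lemma asym_zero_of_supp_finite {x : G → A} (h : (Function.support x).Finite) : Asymptotic x 0 := by
  refine ⟨h.toFinset, fun g hg => ?_⟩
  by_contra h0
  exact hg (h.mem_toFinset.mpr h0)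

lemma eq_of_dual_eq {a b : A} (h : ∀ φ : Module.Dual K A, φ a = φ b) : a = b := by
  rw [← sub_eq_zero]
  rw [← Module.forall_dual_apply_eq_zero_iff K (a - b)]
  intro φ
  rw [map_sub, h φ, sub_self]

lemma finsum_single_dual (g₀ : G) (φ : Module.Dual K A) (x : G → A) :
    ∑ᶠ g, (Pi.single g₀ φ : G → Module.Dual K A) g (x g) = φ (x g₀) := by
  rw [finsum_eq_single _ g₀]
  · rw [Pi.single_eq_same]
  · intro g hg
    rw [Pi.single_eq_of_ne hg]
    rfl

lemma finsum_apply_single (g₀ : G) (a : A) (w : G → Module.Dual K A) :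
    ∑ᶠ g, w g ((Pi.single g₀ a : G → A) g) = w g₀ a := by
  rw [finsum_eq_single _ g₀]
  · rw [Pi.single_eq_same]
  · intro g hg
    rw [Pi.single_eq_of_ne hg, map_zero]

/-! ### the easy duality direction: post-surjective ⟹ dual injective -/

lemma injective_dualC_of_postSurjective {M : Finset G} (p : G → ((M → A) →ₗ[K] A))
    (hps : PostSurjective (nucaL p)) : Function.Injective (nucaL (dualC p)) := by
  have hker : ∀ w : G → Module.Dual K A, nucaL (dualC p) w = 0 → w = 0 := by
    intro w hw
    funext g₀
    apply LinearMap.ext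
    intro a
    have hasym : Asymptotic (Pi.single g₀ a : G → A) (nucaL p 0) := by
      rw [nucaL_zero]
      exact ⟨{g₀}, fun g hg => by
        have : g ≠ g₀ := by simpa using hg
        simp [Pi.single_eq_of_ne this]⟩
    obtain ⟨z, hzasym, hz⟩ := hps 0 (Pi.single g₀ a) hasym
    have hsz : (Function.support z).Finite := by
      apply supp_finite_of_asym_zero
      obtain ⟨Ω, hΩ⟩ := hzasym
      exact ⟨Ω, hΩ⟩
    have hid := ident p z w (Or.inr hsz)
    rw [hz, hw] at hid
    simp only [Pi.zero_apply, LinearMap.zero_apply, finsum_zero] at hid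
    rw [finsum_apply_single] at hid
    simpa using hid
  intro u v huv
  have h0 : nucaL (dualC p) (u - v) = 0 := by
    rw [nucaL_sub, huv, sub_self]
  have := hker _ h0
  rwa [sub_eq_zero] at this



/-! ### the hard duality direction: injective ⟹ dual post-surjective -/

/-- linear-map version of `nucaL` -/
def nucaLM {M : Finset G} (p : G → ((M → A) →ₗ[K] A)) : (G → A) →ₗ[K] (G → A) :=
  LinearMap.pi (fun g => (p g).comp (LinearMap.pi (fun m : ↥M => LinearMap.proj (g * (m : G)))))

lemma nucaLM_apply {M : Finset G} (p : G → ((M → A) →ₗ[K] A)) (x : G → A) :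
    nucaLM p x = nucaL p x := rfl

lemma exists_window [Finite A] {M : Finset G} (p : G → ((M → A) →ₗ[K] A))
    (hinj : Function.Injective (nucaL p)) (Ω : Finset G) :
    ∃ F : Finset G, ∀ x : G → A, (∀ g ∈ F, nucaL p x g = 0) → ∀ g ∈ Ω, x g = 0 := by
  by_contra hcon
  push_neg at hcon
  letI : TopologicalSpace A := ⊥
  haveI : DiscreteTopology A := ⟨rfl⟩
  set Z : Finset G → Set (G → A) :=
    fun F => {x | (∀ g ∈ F, nucaL p x g = 0) ∧ ∃ g ∈ Ω, x g ≠ 0} with hZ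
  have hcont : ∀ g : G, Continuous (fun x : G → A => nucaL p x g) := by
    intro g
    have : (fun x : G → A => nucaL p x g)
        = (fun u : ↥M → A => p g u) ∘ (fun x : G → A => fun m : ↥M => x (g * (m : G))) := rfl
    rw [this]
    exact continuous_of_discreteTopology.comp (continuous_pi fun m => continuous_apply _)
  have hcl : ∀ F, IsClosed (Z F) := by
    intro F
    have hZF : Z F = (⋂ g ∈ F, (fun x : G → A => nucaL p x g) ⁻¹' {0})
        ∩ (⋃ g ∈ Ω, (fun x : G → A => x g) ⁻¹' ({0}ᶜ)) := by
      ext x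
      simp [hZ, Set.mem_iInter, Set.mem_iUnion]
    rw [hZF]
    apply IsClosed.inter
    · exact isClosed_biInter fun g _ => (isClosed_discrete {0}).preimage (hcont g)
    · apply Set.Finite.isClosed_biUnion Ω.finite_toSet
      intro g _
      exact (isClosed_discrete _).preimage (continuous_apply g)
  have hdir : Directed (· ⊇ ·) Z := by
    intro F₁ F₂
    refine ⟨F₁ ∪ F₂, ?_, ?_⟩
    · intro x hx
      exact ⟨fun g hg => hx.1 g (Finset.mem_union_left _ hg), hx.2⟩
    · intro x hx
      exact ⟨fun g hg => hx.1 g (Finset.mem_union_right _ hg), hx.2⟩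
  have hne : ∀ F, (Z F).Nonempty := by
    intro F
    obtain ⟨x, h1, h2⟩ := hcon F
    exact ⟨x, h1, h2⟩
  obtain ⟨x, hx⟩ := IsCompact.nonempty_iInter_of_directed_nonempty_isCompact_isClosed Z hdir hne
    (fun F => (hcl F).isCompact) hcl
  have hx0 : nucaL p x = 0 := by
    funext g
    have := (Set.mem_iInter.mp hx {g}).1 g (Finset.mem_singleton_self g)
    simpa using this
  have : x = 0 := by
    apply hinj
    rw [hx0, nucaL_zero]
  obtain ⟨g, _, hg⟩ := (Set.mem_iInter.mp hx ∅).2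
  rw [this] at hg
  exact hg rfl

lemma exists_preimage_finsupp [Finite A] {M : Finset G} (p : G → ((M → A) →ₗ[K] A))
    (hinj : Function.Injective (nucaL p)) (δ : G → Module.Dual K A)
    (hδ : (Function.support δ).Finite) :
    ∃ W : G → Module.Dual K A, (Function.support W).Finite ∧ nucaL (dualC p) W = δ := by
  obtain ⟨F, hF⟩ := exists_window p hinj hδ.toFinset
  set R : (G → A) →ₗ[K] (↥F → A) :=
    LinearMap.pi (fun f : ↥F => (LinearMap.proj ((f : G))).comp (nucaLM p)) with hR
  set Φ : (G → A) →ₗ[K] K := ∑ g ∈ hδ.toFinset, (δ g).comp (LinearMap.proj g) with hΦ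
  have hΦ_apply : ∀ x, Φ x = ∑ g ∈ hδ.toFinset, δ g (x g) := by
    intro x
    rw [hΦ]
    simp
  have hker : LinearMap.ker R ≤ LinearMap.ker Φ := by
    intro x hx
    rw [LinearMap.mem_ker] at hx ⊢
    rw [hΦ_apply]
    have hxz : ∀ g ∈ hδ.toFinset, x g = 0 := by
      apply hF
      intro g hg
      have : R x ⟨g, hg⟩ = 0 := by rw [hx]; rfl
      exact this
    exact Finset.sum_eq_zero fun g hg => by rw [hxz g hg, map_zero]
  set f₀ : ↥(LinearMap.range R) →ₗ[K] K :=
    (Submodule.liftQ (LinearMap.ker R) Φ hker).comp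
      (LinearMap.quotKerEquivRange R).symm.toLinearMap with hf₀
  obtain ⟨ψ, hψ⟩ := LinearMap.exists_extend f₀
  have hψR : ∀ x, ψ (R x) = Φ x := by
    intro x
    have h1 : ψ (R x) = ψ ((LinearMap.range R).subtype ⟨R x, LinearMap.mem_range_self R x⟩) := rfl
    rw [h1, ← LinearMap.comp_apply, hψ, hf₀]
    simp only [LinearMap.comp_apply, LinearEquiv.coe_toLinearMap]
    rw [LinearMap.quotKerEquivRange_symm_apply_image]
    exact Submodule.liftQ_apply _ _ _
  set W : G → Module.Dual K A :=
    fun g => if hg : g ∈ F then ψ.comp (LinearMap.single K (fun _ : ↥F => A) ⟨g, hg⟩) else 0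
    with hW
  have hWsupp : Function.support W ⊆ (F : Set G) := by
    intro g hg
    simp only [Function.mem_support] at hg
    by_contra hgF
    have hgF' : g ∉ F := by simpa using hgF
    apply hg
    show (if hg : g ∈ F then ψ.comp (LinearMap.single K (fun _ : ↥F => A) ⟨g, hg⟩) else 0) = 0
    exact dif_neg hgF'
  have hWfin : (Function.support W).Finite := Set.Finite.subset F.finite_toSet hWsupp
  have hW1 : ∀ x : G → A, ∑ᶠ g, W g (nucaL p x g) = Φ x := by
    intro x
    have hsupp : (Function.support fun g => W g (nucaL p x g)) ⊆ (F : Set G) := by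
      intro g hg
      simp only [Function.mem_support] at hg
      apply hWsupp
      simp only [Function.mem_support]
      intro h0
      rw [h0] at hg
      exact hg rfl
    rw [finsum_eq_finset_sum_of_support_subset _ (by exact_mod_cast hsupp)]
    have : ∀ g ∈ F, W g (nucaL p x g)
        = (fun g => if hg : g ∈ F then ψ (Pi.single (⟨g, hg⟩ : ↥F) (nucaL p x g)) else 0) g := by
      intro g hg
      rw [hW]
      simp only [hg, dif_pos]
      rfl
    rw [Finset.sum_congr rfl this]
    rw [← Finset.sum_attach F]
    have : ∀ m : ↥F, (fun g => if hg : g ∈ F then ψ (Pi.single (⟨g, hg⟩ : ↥F) (nucaL p x g)) else 0) (m : G)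
        = ψ (Pi.single m (R x m)) := by
      intro m
      simp only [m.2, dif_pos]
      rfl
    rw [Finset.sum_congr rfl (fun m _ => this m)]
    rw [← map_sum, ← Finset.univ_eq_attach, Finset.univ_sum_single (R x)]
    exact hψR x
  refine ⟨W, hWfin, ?_⟩
  have hδ'fin := support_nucaL_finite (dualC p) hWfin
  funext g₀
  apply LinearMap.ext
  intro a
  have hid := ident p (Pi.single g₀ a) W (Or.inl hWfin)
  rw [hW1] at hid
  rw [finsum_apply_single] at hid
  rw [← hid, hΦ_apply]
  have : ∀ g ∈ hδ.toFinset, δ g ((Pi.single g₀ a : G → A) g)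
      = (fun g => δ g ((Pi.single g₀ a : G → A) g)) g := fun _ _ => rfl
  rw [← finsum_eq_finset_sum_of_support_subset (fun g => δ g ((Pi.single g₀ a : G → A) g))]
  · rw [finsum_apply_single]
  · intro g hg
    simp only [Function.mem_support] at hg
    apply hδ.mem_toFinset.mpr
    intro h0
    rw [h0] at hg
    simpa using hg

lemma dualC_postSurjective_of_injective [Finite A] {M : Finset G}
    (p : G → ((M → A) →ₗ[K] A)) (hinj : Function.Injective (nucaL p)) :
    PostSurjective (nucaL (dualC p)) := by
  intro X Y hasym
  have hδ : (Function.support (Y - nucaL (dualC p) X)).Finite := by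
    obtain ⟨Ω, hΩ⟩ := hasym
    refine Set.Finite.subset Ω.finite_toSet ?_
    intro g hg
    by_contra hgΩ
    apply hg
    simp [hΩ g hgΩ]
  obtain ⟨W, hWfin, hWeq⟩ := exists_preimage_finsupp p hinj _ hδ
  refine ⟨X + W, ?_, ?_⟩
  · exact ⟨hWfin.toFinset, fun g hg => by
      have : W g = 0 := by
        by_contra h0
        exact hg (hWfin.mem_toFinset.mpr h0)
      simp [this]⟩
  · rw [nucaL_add, hWeq]
    funext g
    simp



/-! ### alphabet transport along a linear equivalence -/

variable {B : Type*} [AddCommGroup B] [Module K B]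

lemma finite_lmap {V W : Type*} [Finite V] [Finite W] [AddCommGroup V] [Module K V]
    [AddCommGroup W] [Module K W] : Finite (V →ₗ[K] W) :=
  Finite.of_injective _ DFunLike.coe_injective

def sTrans {M : Finset G} (e : A ≃ₗ[K] B) (μ : (M → A) →ₗ[K] A) : (M → B) →ₗ[K] B :=
  (e.toLinearMap.comp μ).comp (LinearMap.pi fun m : ↥M => e.symm.toLinearMap.comp (LinearMap.proj m))

lemma sTrans_apply {M : Finset G} (e : A ≃ₗ[K] B) (μ : (M → A) →ₗ[K] A) (u : ↥M → B) :
    sTrans e μ u = e (μ (fun m => e.symm (u m))) := rfl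

def ltrans {M : Finset G} (e : A ≃ₗ[K] B) (s : G → ((M → A) →ₗ[K] A)) :
    G → ((M → B) →ₗ[K] B) := fun g => sTrans e (s g)

lemma nucaL_ltrans {M : Finset G} (e : A ≃ₗ[K] B) (s : G → ((M → A) →ₗ[K] A)) (x : G → B)
    (g : G) : nucaL (ltrans e s) x g = e (nucaL s (fun h => e.symm (x h)) g) := rfl

lemma injective_ltrans {M : Finset G} (e : A ≃ₗ[K] B) (s : G → ((M → A) →ₗ[K] A))
    (h : Function.Injective (nucaL s)) : Function.Injective (nucaL (ltrans e s)) := by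
  intro x y hxy
  have : nucaL s (fun h => e.symm (x h)) = nucaL s (fun h => e.symm (y h)) := by
    funext g
    have := congrFun hxy g
    rw [nucaL_ltrans, nucaL_ltrans] at this
    exact e.injective this
  have := h this
  funext g
  have := congrFun this g
  simpa using e.symm.injective (by simpa using this)

lemma postSurjective_ltrans {M : Finset G} (e : A ≃ₗ[K] B) (s : G → ((M → A) →ₗ[K] A))
    (h : PostSurjective (nucaL s)) : PostSurjective (nucaL (ltrans e s)) := by
  intro x y hasym
  obtain ⟨Ω, hΩ⟩ := hasym
  have hasym' : Asymptotic (fun h => e.symm (y h)) (nucaL s (fun h => e.symm (x h))) := by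
    refine ⟨Ω, fun g hg => ?_⟩
    have := hΩ g hg
    rw [nucaL_ltrans] at this
    show e.symm (y g) = _
    rw [this]
    simp
  obtain ⟨z, ⟨Ω', hΩ'⟩, hz⟩ := h _ _ hasym'
  refine ⟨fun h => e (z h), ⟨Ω', fun g hg => ?_⟩, ?_⟩
  · show e (z g) = x g
    rw [hΩ' g hg]; simp
  · funext g
    rw [nucaL_ltrans]
    have : (fun h => e.symm (e (z h))) = z := by funext h; simp
    rw [this, hz]
    simp

lemma ubs_ltrans {M : Finset G} (e : A ≃ₗ[K] B) (s : G → ((M → A) →ₗ[K] A))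
    (h : UniformlyBoundedSingularity s) : UniformlyBoundedSingularity (ltrans e s) := by
  intro E h1 hsym
  obtain ⟨F, hEF, c, hc⟩ := h E h1 hsym
  exact ⟨F, hEF, sTrans e c, fun g hg => by rw [ltrans, hc g hg]⟩

lemma ltrans_orbitClosure [Finite A] [Finite B] {M : Finset G} (e : A ≃ₗ[K] B)
    (s : G → ((M → A) →ₗ[K] A)) :
    (fun p : G → ((M → A) →ₗ[K] A) => ltrans e p) '' orbitClosure s
      = orbitClosure (ltrans e s) := by
  haveI := finite_lmap (K := K) (V := ↥M → A) (W := A)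
  haveI := finite_lmap (K := K) (V := ↥M → B) (W := B)
  apply theta_image_orbitClosure
  · apply continuous_of_local
    intro h
    exact ⟨{h}, fun v => sTrans e (v ⟨h, Finset.mem_singleton_self h⟩), fun p => rfl⟩
  · intro g p
    rfl



/-! ### equivariance and the limit argument -/

lemma shiftc_shiftc_inv {S₀ : Type*} (g : G) (x : G → S₀) : shiftc g (shiftc g⁻¹ x) = x := by
  funext h
  simp [shiftc]

lemma shiftc_inv_shiftc {S₀ : Type*} (g : G) (x : G → S₀) : shiftc g⁻¹ (shiftc g x) = x := by
  funext h
  simp [shiftc]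

lemma nuca_shiftc_eq {M : Finset G} (a : G → ((M → A) → A)) (g : G) :
    nuca (shiftc g a) = shiftc g ∘ nuca a ∘ shiftc g⁻¹ := by
  funext x h
  show a (g⁻¹ * h) (fun m : ↥M => x (h * (m : G)))
    = a (g⁻¹ * h) (fun m : ↥M => (shiftc g⁻¹ x) ((g⁻¹ * h) * (m : G)))
  congr 1
  funext m
  simp [shiftc, mul_assoc]

lemma comp_shift {M N : Finset G} (a : G → ((M → A) → A)) (b : G → ((N → A) → A))
    (h : nuca a ∘ nuca b = id) (g : G) : nuca (shiftc g a) ∘ nuca (shiftc g b) = id := by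
  rw [nuca_shiftc_eq, nuca_shiftc_eq]
  funext x
  simp only [Function.comp_apply]
  rw [shiftc_inv_shiftc]
  have := congrFun h (shiftc g⁻¹ x)
  simp only [Function.comp_apply, id_eq] at this
  rw [this, shiftc_shiftc_inv]
  rfl

lemma nucaL_coe {M : Finset G} (p : G → ((M → A) →ₗ[K] A)) :
    nucaL p = nuca (fun g => ((p g : (↥M → A) → A))) := rfl

/-- A single two-sided NUCA inverse of `σ_s` yields stable invertibility. -/
lemma stablyInvertible_of_inverse [Finite A] {M N : Finset G} (s : G → ((M → A) →ₗ[K] A))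
    (t : G → ((N → A) → A))
    (h1 : nucaL s ∘ nuca t = id) (h2 : nuca t ∘ nucaL s = id) : StablyInvertibleL s := by
  classical
  letI : TopologicalSpace ((↥M → A) →ₗ[K] A) := ⊥
  letI : TopologicalSpace ((↥N → A) → A) := ⊥
  haveI : DiscreteTopology ((↥M → A) →ₗ[K] A) := ⟨rfl⟩
  haveI : DiscreteTopology ((↥N → A) → A) := ⟨rfl⟩
  haveI := finite_lmap (K := K) (V := ↥M → A) (W := A)
  refine ⟨N, t, ?_⟩
  intro p hp
  have hp' : p ∈ closure (Set.range fun g => shiftc g s) := by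
    rw [orbitClosure, orbit_set_eq] at hp
    exact hp
  haveI hne : Filter.NeBot (Filter.comap (fun g => shiftc g s) (𝓝 p)) := by
    rw [Filter.comap_neBot_iff]
    intro u hu
    obtain ⟨y, hy1, ⟨g, rfl⟩⟩ := mem_closure_iff_nhds.mp hp' u hu
    exact ⟨g, hy1⟩
  set U : Ultrafilter G := Ultrafilter.of (Filter.comap (fun g => shiftc g s) (𝓝 p)) with hUdef
  have hU1 : Filter.Tendsto (fun g => shiftc g s) U (𝓝 p) := by
    calc Filter.map (fun g => shiftc g s) ↑U
        ≤ Filter.map (fun g => shiftc g s) (Filter.comap (fun g => shiftc g s) (𝓝 p)) :=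
          Filter.map_mono (Ultrafilter.of_le _)
      _ ≤ 𝓝 p := Filter.map_comap_le
  obtain ⟨q, -, hU2⟩ := isCompact_univ.ultrafilter_le_nhds (U.map (fun g => shiftc g t))
    (by simp)
  have hU2 : Filter.Tendsto (fun g => shiftc g t) U (𝓝 q) := hU2
  have hqmem : q ∈ orbitClosure t := by
    rw [orbitClosure, orbit_set_eq]
    exact mem_closure_of_tendsto hU2 (Filter.Eventually.of_forall (fun g => Set.mem_range_self g))
  refine ⟨q, hqmem, ?_, ?_⟩
  · funext x g₀
    simp only [Function.comp_apply, id_eq]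
    have hWp : (fun p' : G → ((↥M → A) →ₗ[K] A) => p' g₀) ⁻¹' {p g₀} ∈ 𝓝 p :=
      (Continuous.isOpen_preimage (continuous_apply g₀) _ (isOpen_discrete _)).mem_nhds rfl
    have hWq : (⋂ m : ↥M, (fun q' : G → ((↥N → A) → A) => q' (g₀ * (m : G)))
        ⁻¹' {q (g₀ * (m : G))}) ∈ 𝓝 q := by
      refine Filter.iInter_mem.mpr (fun m => ?_)
      exact (Continuous.isOpen_preimage (continuous_apply _) _ (isOpen_discrete _)).mem_nhds rfl
    obtain ⟨g, hg1, hg2⟩ := Filter.nonempty_of_mem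
      (Filter.inter_mem (Filter.mem_map.mp (hU1 hWp)) (Filter.mem_map.mp (hU2 hWq)))
    have hg1' : shiftc g s g₀ = p g₀ := hg1
    have hg2' : ∀ m : ↥M, shiftc g t (g₀ * (m : G)) = q (g₀ * (m : G)) := by
      intro m
      exact Set.mem_iInter.mp hg2 m
    have hpair := comp_shift (fun h => ((s h : (↥M → A) → A))) t
      (by rw [← nucaL_coe]; exact h1) g
    have hval := congrFun (congrFun hpair x) g₀
    simp only [Function.comp_apply, id_eq] at hval
    calc nucaL p (nuca q x) g₀
        = p g₀ (fun m : ↥M => nuca q x (g₀ * (m : G))) := rfl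
      _ = (shiftc g s) g₀ (fun m : ↥M => nuca (shiftc g t) x (g₀ * (m : G))) := by
          rw [← hg1']
          congr 1
          funext m
          show q (g₀ * (m : G)) _ = (shiftc g t) (g₀ * (m : G)) _
          rw [hg2' m]
      _ = x g₀ := hval
  · funext x g₀
    simp only [Function.comp_apply, id_eq]
    have hWq : (fun q' : G → ((↥N → A) → A) => q' g₀) ⁻¹' {q g₀} ∈ 𝓝 q :=
      (Continuous.isOpen_preimage (continuous_apply g₀) _ (isOpen_discrete _)).mem_nhds rfl
    have hWp : (⋂ n : ↥N, (fun p' : G → ((↥M → A) →ₗ[K] A) => p' (g₀ * (n : G)))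
        ⁻¹' {p (g₀ * (n : G))}) ∈ 𝓝 p := by
      refine Filter.iInter_mem.mpr (fun n => ?_)
      exact (Continuous.isOpen_preimage (continuous_apply _) _ (isOpen_discrete _)).mem_nhds rfl
    obtain ⟨g, hg1, hg2⟩ := Filter.nonempty_of_mem
      (Filter.inter_mem (Filter.mem_map.mp (hU1 hWp)) (Filter.mem_map.mp (hU2 hWq)))
    have hg2' : shiftc g t g₀ = q g₀ := hg2
    have hg1' : ∀ n : ↥N, shiftc g s (g₀ * (n : G)) = p (g₀ * (n : G)) := by
      intro n
      exact Set.mem_iInter.mp hg1 n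
    have hpair := comp_shift t (fun h => ((s h : (↥M → A) → A)))
      (by rw [← nucaL_coe]; exact h2) g
    have hval := congrFun (congrFun hpair x) g₀
    simp only [Function.comp_apply, id_eq] at hval
    calc nuca q (nucaL p x) g₀
        = q g₀ (fun n : ↥N => nucaL p x (g₀ * (n : G))) := rfl
      _ = (shiftc g t) g₀ (fun n : ↥N => nucaL (shiftc g s) x (g₀ * (n : G))) := by
          rw [← hg2']
          apply congrArg
          funext n
          show p (g₀ * (n : G)) _ = (shiftc g s) (g₀ * (n : G)) _
          rw [hg1' n]
      _ = x g₀ := hval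



/-! ### dualC: equivariance, continuity, orbit closure, UBS -/

lemma nucaL_smul {M : Finset G} (p : G → ((M → A) →ₗ[K] A)) (k : K) (x : G → A) :
    nucaL p (k • x) = k • nucaL p x := by
  funext g
  show p g (fun m : ↥M => (k • x) (g * (m : G))) = _
  have : (fun m : ↥M => (k • x) (g * (m : G))) = k • (fun m : ↥M => x (g * (m : G))) := rfl
  rw [this, map_smul]
  rfl

lemma dualC_shiftc {M : Finset G} (p : G → ((M → A) →ₗ[K] A)) (g : G) :
    dualC (shiftc g p) = shiftc g (dualC p) := by
  funext h
  simp only [dualC, shiftc, mul_assoc]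

lemma dualC_orbitClosure [Finite A] [Finite (Module.Dual K A)] {M : Finset G}
    (s : G → ((M → A) →ₗ[K] A)) :
    (fun p : G → ((M → A) →ₗ[K] A) => dualC p) '' orbitClosure s
      = orbitClosure (dualC s) := by
  haveI := finite_lmap (K := K) (V := ↥M → A) (W := A)
  haveI := finite_lmap (K := K) (V := ↥(Minv M) → Module.Dual K A) (W := Module.Dual K A)
  apply theta_image_orbitClosure
  · apply continuous_of_local
    intro h
    refine ⟨Finset.image (fun m => h * m⁻¹) M,
      fun v => ∑ m ∈ M.attach, ((v ⟨h * (m : G)⁻¹, Finset.mem_image.mpr ⟨(m : G), m.2, rfl⟩⟩).comp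
        (LinearMap.single K (fun _ : ↥M => A) m)).dualMap.comp (LinearMap.proj (minvElt m)),
      fun p => rfl⟩
  · intro g p
    exact dualC_shiftc p g

lemma ubs_dualC {M : Finset G} (s : G → ((M → A) →ₗ[K] A))
    (h : UniformlyBoundedSingularity s) : UniformlyBoundedSingularity (dualC s) := by
  intro E h1E hsymE
  set B : Finset G := ((E ∪ M) ∪ Minv M) ∪ {1} with hBdef
  have hEB : E ⊆ B := fun x hx =>
    Finset.mem_union_left _ (Finset.mem_union_left _ (Finset.mem_union_left _ hx))
  have hMB : M ⊆ B := fun x hx =>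
    Finset.mem_union_left _ (Finset.mem_union_left _ (Finset.mem_union_right _ hx))
  have hMinvB : Minv M ⊆ B := fun x hx =>
    Finset.mem_union_left _ (Finset.mem_union_right _ hx)
  have h1B : (1 : G) ∈ B := Finset.mem_union_right _ (Finset.mem_singleton_self 1)
  have hsymB : ∀ b ∈ B, b⁻¹ ∈ B := by
    intro b hb
    rcases Finset.mem_union.mp hb with hb' | hb1
    · rcases Finset.mem_union.mp hb' with hb'' | hbMinv
      · rcases Finset.mem_union.mp hb'' with hbE | hbM
        · exact hEB (hsymE b hbE)
        · exact hMinvB (mem_Minv hbM)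
      · obtain ⟨m, hm, rfl⟩ := Finset.mem_image.mp hbMinv
        rw [inv_inv]
        exact hMB hm
    · rw [Finset.mem_singleton.mp hb1]
      simpa using h1B
  set E₂ : Finset G := B * B * B with hE₂def
  have h1E₂ : (1 : G) ∈ E₂ := by
    have : (1 : G) = 1 * 1 * 1 := by group
    rw [this]
    exact Finset.mul_mem_mul (Finset.mul_mem_mul h1B h1B) h1B
  have hsymE₂ : ∀ g ∈ E₂, g⁻¹ ∈ E₂ := by
    intro g hg
    obtain ⟨u, hu, b3, hb3, rfl⟩ := Finset.mem_mul.mp hg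
    obtain ⟨b1, hb1, b2, hb2, rfl⟩ := Finset.mem_mul.mp hu
    have : (b1 * b2 * b3)⁻¹ = b3⁻¹ * b2⁻¹ * b1⁻¹ := by group
    rw [this]
    exact Finset.mul_mem_mul (Finset.mul_mem_mul (hsymB _ hb3) (hsymB _ hb2)) (hsymB _ hb1)
  obtain ⟨F₁, hEF₁, c, hc⟩ := h E₂ h1E₂ hsymE₂
  have h1F₁ : (1 : G) ∈ F₁ := hEF₁ h1E₂
  refine ⟨F₁ * B, ?_, ?_, ?_⟩
  · intro x hx
    have : x = 1 * x := by group
    rw [this]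
    exact Finset.mul_mem_mul h1F₁ (hEB hx)
  · exact ∑ m ∈ M.attach, (c.comp
      (LinearMap.single K (fun _ : ↥M => A) m)).dualMap.comp (LinearMap.proj (minvElt m))
  · intro g hg
    obtain ⟨hgmem, hgnot⟩ := hg
    rw [Finset.coe_mul] at hgmem hgnot
    obtain ⟨u, hu, ev, hev, rfl⟩ := Set.mem_mul.mp hgmem
    obtain ⟨f₁, hf₁, b, hb, rfl⟩ := Set.mem_mul.mp hu
    have hval : ∀ m : ↥M, s ((f₁ * b * ev) * (m : G)⁻¹) = c := by
      intro m
      apply hc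
      constructor
      · refine Set.mem_mul.mpr ⟨f₁, hf₁, b * (ev * (m : G)⁻¹), ?_, by group⟩
        have hbm : b * (ev * (m : G)⁻¹) ∈ (E₂ : Set G) := by
          have : b * (ev * (m : G)⁻¹) ∈ B * B * B := by
            have h1 : ev ∈ B := hEB hev
            have h2 : (m : G)⁻¹ ∈ B := hMinvB (mem_Minv m.2)
            have : b * (ev * (m : G)⁻¹) = b * ev * (m : G)⁻¹ := by group
            rw [this]
            exact Finset.mul_mem_mul (Finset.mul_mem_mul hb h1) h2
          exact_mod_cast this
        exact hbm
      · intro hcon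
        apply hgnot
        refine Set.mem_mul.mpr ⟨(f₁ * b * ev) * (m : G)⁻¹, hcon, (m : G), ?_, by group⟩
        exact_mod_cast hMB m.2
    simp only [dualC]
    exact Finset.sum_congr rfl (fun m _ => by rw [hval m])

/-! ### linearization of an inverse -/

lemma exists_linearization {N : Finset G} (q : G → ((N → A) → A))
    (hadd : ∀ x y : G → A, nuca q (x + y) = nuca q x + nuca q y)
    (hsmul : ∀ (k : K) (x : G → A), nuca q (k • x) = k • nuca q x) :
    ∃ qL : G → ((N → A) →ₗ[K] A), ∀ g, ⇑(qL g) = q g := by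
  classical
  have hext : ∀ (g : G), ∃ Ext : (↥N → A) →ₗ[K] (G → A), ∀ u, q g u = nuca q (Ext u) g := by
    intro g
    refine ⟨{ toFun := fun u => fun h => if hh : g⁻¹ * h ∈ N then u ⟨g⁻¹ * h, hh⟩ else 0
              map_add' := by
                intro u v
                funext h
                by_cases hh : g⁻¹ * h ∈ N <;> simp [hh]
              map_smul' := by
                intro k u
                funext h
                by_cases hh : g⁻¹ * h ∈ N <;> simp [hh] }, ?_⟩
    intro u
    show q g u = q g (fun n : ↥N =>
      if hh : g⁻¹ * (g * (n : G)) ∈ N then u ⟨g⁻¹ * (g * (n : G)), hh⟩ else 0)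
    congr 1
    funext n
    have h1 : g⁻¹ * (g * (n : G)) = (n : G) := by group
    have h2 : g⁻¹ * (g * (n : G)) ∈ N := by rw [h1]; exact n.2
    rw [dif_pos h2]
    congr 1
    exact Subtype.ext h1.symm
  choose Ext hExt using hext
  refine ⟨fun g =>
    { toFun := q g
      map_add' := by
        intro u v
        show q g (u + v) = q g u + q g v
        rw [hExt g u, hExt g v, hExt g (u + v), map_add (Ext g), hadd]
        rfl
      map_smul' := by
        intro k u
        show q g (k • u) = k • q g u
        rw [hExt g u, hExt g (k • u), map_smul (Ext g), hsmul]
        rfl },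
    fun g => rfl⟩

lemma inverse_additive {M : Finset G} (p : G → ((M → A) →ₗ[K] A))
    {N : Finset G} (q : G → ((N → A) → A))
    (h1 : nucaL p ∘ nuca q = id) (h2 : nuca q ∘ nucaL p = id) :
    (∀ x y : G → A, nuca q (x + y) = nuca q x + nuca q y)
      ∧ (∀ (k : K) (x : G → A), nuca q (k • x) = k • nuca q x) := by
  have hσ : ∀ z, nucaL p (nuca q z) = z := fun z => congrFun h1 z
  have hτ : ∀ z, nuca q (nucaL p z) = z := fun z => congrFun h2 z
  constructor
  · intro x y
    have : x + y = nucaL p (nuca q x + nuca q y) := by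
      rw [nucaL_add, hσ, hσ]
    rw [this, hτ]
  · intro k x
    have : k • x = nucaL p (k • nuca q x) := by
      rw [nucaL_smul, hσ]
    rw [this, hτ]



/-! ### dualizing an inverse -/

lemma support_pi_single_finite {W : Type*} [Zero W] (g₀ : G) (w : W) :
    (Function.support (Pi.single g₀ w : G → W)).Finite := by
  apply Set.Finite.subset (Set.finite_singleton g₀)
  intro g hg
  simp only [Function.mem_support] at hg
  by_contra hne
  have := Pi.single_eq_of_ne (M := fun _ : G => W) hne w
  exact hg this

lemma inverse_dual [FiniteDimensional K A] {M N : Finset G} (s : G → ((M → A) →ₗ[K] A))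
    (q : G → ((N → Module.Dual K A) →ₗ[K] Module.Dual K A))
    (h1 : nucaL (dualC s) ∘ nucaL q = id) (h2 : nucaL q ∘ nucaL (dualC s) = id) :
    (nucaL s ∘ nuca (fun g (u : ↥(Minv N) → A) =>
        (Module.evalEquiv K A).symm (dualC q g (fun n => Module.evalEquiv K A (u n)))) = id)
    ∧ (nuca (fun g (u : ↥(Minv N) → A) =>
        (Module.evalEquiv K A).symm (dualC q g (fun n => Module.evalEquiv K A (u n))))
      ∘ nucaL s = id) := by
  set ev := Module.evalEquiv K A with hev
  set qhat : G → ((↥(Minv N) → A) → A) :=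
    fun g (u : ↥(Minv N) → A) => ev.symm (dualC q g (fun n => ev (u n))) with hqhat
  have hkey : ∀ (x : G → A) (g : G),
      nuca qhat x g = ev.symm (nucaL (dualC q) (fun h => ev (x h)) g) := fun x g => rfl
  constructor
  · funext x g₀
    simp only [Function.comp_apply, id_eq]
    apply eq_of_dual_eq (K := K)
    intro φ
    have hYfin := support_pi_single_finite g₀ φ
    have hcomp := congrFun h2 (Pi.single g₀ φ)
    simp only [Function.comp_apply, id_eq] at hcomp
    calc φ (nucaL s (nuca qhat x) g₀)
        = ∑ᶠ g, (Pi.single g₀ φ : G → Module.Dual K A) g (nucaL s (nuca qhat x) g) :=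
          (finsum_single_dual g₀ φ _).symm
      _ = ∑ᶠ g, (nucaL (dualC s) (Pi.single g₀ φ)) g ((nuca qhat x) g) :=
          ident s _ _ (Or.inl hYfin)
      _ = ∑ᶠ g, (nucaL (dualC q) (fun h => ev (x h))) g
            ((nucaL (dualC s) (Pi.single g₀ φ)) g) := by
          apply finsum_congr
          intro g
          rw [hkey x g]
          simp only [hev]
          exact Module.apply_evalEquiv_symm_apply (R := K) (M := A) _ _
      _ = ∑ᶠ g, (fun h => ev (x h)) g (nucaL q (nucaL (dualC s) (Pi.single g₀ φ)) g) :=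
          (ident q (nucaL (dualC s) (Pi.single g₀ φ)) (fun h => ev (x h))
            (Or.inr (support_nucaL_finite (dualC s) hYfin))).symm
      _ = ∑ᶠ g, ev (x g) ((Pi.single g₀ φ : G → Module.Dual K A) g) := by
          rw [hcomp]
      _ = ev (x g₀) φ := finsum_apply_single g₀ φ (fun g => ev (x g))
      _ = φ (x g₀) := by rw [hev]; simp
  · funext x g₀
    simp only [Function.comp_apply, id_eq]
    apply eq_of_dual_eq (K := K)
    intro φ
    have hYfin := support_pi_single_finite g₀ φ
    have hcomp := congrFun h1 (nucaL q (Pi.single g₀ φ))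
    simp only [Function.comp_apply, id_eq] at hcomp
    have hcomp2 := congrFun h1 (Pi.single g₀ φ)
    simp only [Function.comp_apply, id_eq] at hcomp2
    calc φ (nuca qhat (nucaL s x) g₀)
        = (nucaL (dualC q) (fun h => ev (nucaL s x h))) g₀ φ := by
          rw [hkey (nucaL s x) g₀]
          simp only [hev]
          exact Module.apply_evalEquiv_symm_apply (R := K) (M := A) φ _
      _ = ∑ᶠ g, (nucaL (dualC q) (fun h => ev (nucaL s x h))) g
            ((Pi.single g₀ φ : G → Module.Dual K A) g) :=
          (finsum_apply_single g₀ φ _).symm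
      _ = ∑ᶠ g, (fun h => ev (nucaL s x h)) g (nucaL q (Pi.single g₀ φ) g) :=
          (ident q (Pi.single g₀ φ) _ (Or.inr hYfin)).symm
      _ = ∑ᶠ g, (nucaL q (Pi.single g₀ φ)) g (nucaL s x g) := by
          apply finsum_congr
          intro g
          rw [hev]
          simp
      _ = ∑ᶠ g, (nucaL (dualC s) (nucaL q (Pi.single g₀ φ))) g (x g) :=
          ident s x _ (Or.inl (support_nucaL_finite q hYfin))
      _ = ∑ᶠ g, (Pi.single g₀ φ : G → Module.Dual K A) g (x g) := by
          rw [hcomp2]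
      _ = φ (x g₀) := finsum_single_dual g₀ φ x



/-! ### plain transport and inverse transport -/

def ptrans {N : Finset G} (e : A ≃ₗ[K] B) (t : G → ((N → A) → A)) : G → ((N → B) → B) :=
  fun g u => e (t g (fun n => e.symm (u n)))

lemma comp_ltrans_ptrans {M N : Finset G} (e : A ≃ₗ[K] B) (u : G → ((M → A) →ₗ[K] A))
    (t : G → ((N → A) → A)) (h : nucaL u ∘ nuca t = id) :
    nucaL (ltrans e u) ∘ nuca (ptrans e t) = id := by
  funext y g
  simp only [Function.comp_apply, id_eq]
  have hcongr := congrFun h (fun z => e.symm (y z))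
  simp only [Function.comp_apply, id_eq] at hcongr
  calc nucaL (ltrans e u) (nuca (ptrans e t) y) g
      = e (nucaL u (fun h' => e.symm (nuca (ptrans e t) y h')) g) := rfl
    _ = e (nucaL u (nuca t (fun z => e.symm (y z))) g) := by
        congr 2
        funext h'
        show e.symm (e (t h' (fun n => e.symm (y (h' * (n : G)))))) = _
        simp
        rfl
    _ = y g := by rw [hcongr]; simp

lemma comp_ptrans_ltrans {M N : Finset G} (e : A ≃ₗ[K] B) (u : G → ((M → A) →ₗ[K] A))
    (t : G → ((N → A) → A)) (h : nuca t ∘ nucaL u = id) :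
    nuca (ptrans e t) ∘ nucaL (ltrans e u) = id := by
  funext y g
  simp only [Function.comp_apply, id_eq]
  have hcongr := congrFun h (fun z => e.symm (y z))
  simp only [Function.comp_apply, id_eq] at hcongr
  calc nuca (ptrans e t) (nucaL (ltrans e u) y) g
      = e (nuca t (fun h' => e.symm (nucaL (ltrans e u) y h')) g) := rfl
    _ = e (nuca t (nucaL u (fun z => e.symm (y z))) g) := by
        congr 2
        funext h'
        show e.symm (e (u h' (fun m => e.symm (y (h' * (m : G)))))) = _
        simp
        rfl
    _ = y g := by rw [hcongr]; simp

lemma ltrans_ltrans_symm {M : Finset G} (e : A ≃ₗ[K] B) (w : G → ((M → B) →ₗ[K] B)) :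
    ltrans e (ltrans e.symm w) = w := by
  funext g
  apply LinearMap.ext
  intro v
  show e (e.symm (w g (fun m => e (e.symm (v m))))) = w g v
  simp only [LinearEquiv.apply_symm_apply]

/-! ### master reduction -/

lemma master_inv [Finite A] [FiniteDimensional K A] {M : Finset G}
    (s : G → ((M → A) →ₗ[K] A)) (e : A ≃ₗ[K] Module.Dual K A)
    (hstar : StablyInvertibleL (ltrans e.symm (dualC s))) : StablyInvertibleL s := by
  obtain ⟨N, t, hInv⟩ := hstar
  obtain ⟨q₀, hq₀mem, h1, h2⟩ := hInv _ (self_mem_orbitClosure _)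
  have hds : dualC s = ltrans e (ltrans e.symm (dualC s)) := (ltrans_ltrans_symm e _).symm
  have h1' : nucaL (dualC s) ∘ nuca (ptrans e q₀) = id := by
    rw [hds]; exact comp_ltrans_ptrans e _ q₀ h1
  have h2' : nuca (ptrans e q₀) ∘ nucaL (dualC s) = id := by
    rw [hds]; exact comp_ptrans_ltrans e _ q₀ h2
  obtain ⟨hadd, hsmul⟩ := inverse_additive (dualC s) (ptrans e q₀) h1' h2'
  obtain ⟨qL, hqL⟩ := exists_linearization (ptrans e q₀) hadd hsmul
  have hqLc : nucaL qL = nuca (ptrans e q₀) := by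
    have hcoe : (fun g => (⇑(qL g) : (↥N → Module.Dual K A) → Module.Dual K A)) = ptrans e q₀ :=
      funext fun g => hqL g
    rw [nucaL_coe, hcoe]
  have h1L : nucaL (dualC s) ∘ nucaL qL = id := by rw [hqLc]; exact h1'
  have h2L : nucaL qL ∘ nucaL (dualC s) = id := by rw [hqLc]; exact h2'
  obtain ⟨hA, hB⟩ := inverse_dual s qL h1L h2L
  exact stablyInvertible_of_inverse s _ hA hB


end NUCAProof
end Aux


/-- over a countable group and a finite-dimensional vector space
alphabet over a finite field, Question 1 (stable injectivity implies stable
invertibility) has an affirmative answer for all linear NUCA with finite memory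
and uniformly bounded singularity iff Question 2 (stable post-surjectivity
implies stable invertibility) does. -/
theorem linear_questions_equivalent {G : Type*} [Group G] [Countable G]
    {K : Type*} [Field K] [Fintype K]
    {A : Type*} [AddCommGroup A] [Module K A] [FiniteDimensional K A] :
    (∀ (M : Finset G) (s : G → ((M → A) →ₗ[K] A)),
        UniformlyBoundedSingularity s → StablyInjectiveL s → StablyInvertibleL s) ↔
    (∀ (M : Finset G) (s : G → ((M → A) →ₗ[K] A)),
        UniformlyBoundedSingularity s → StablyPostSurjectiveL s → StablyInvertibleL s) := by
  haveI : Finite A := Module.finite_of_finite K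
  haveI : Finite (Module.Dual K A) :=
    NUCAProof.finite_lmap (K := K) (V := A) (W := K)
  set e : A ≃ₗ[K] Module.Dual K A := (Module.finBasis K A).toDualEquiv with he
  constructor
  · intro H M s hUBS hSPS
    have hUBS' := NUCAProof.ubs_ltrans e.symm (NUCAProof.dualC s) (NUCAProof.ubs_dualC s hUBS)
    have hSI' : StablyInjectiveL (NUCAProof.ltrans e.symm (NUCAProof.dualC s)) := by
      intro r hr
      rw [← NUCAProof.ltrans_orbitClosure e.symm (NUCAProof.dualC s)] at hr
      obtain ⟨w, hw, rfl⟩ := hr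
      rw [← NUCAProof.dualC_orbitClosure s] at hw
      obtain ⟨p, hp, rfl⟩ := hw
      exact NUCAProof.injective_ltrans e.symm (NUCAProof.dualC p)
        (NUCAProof.injective_dualC_of_postSurjective p (hSPS p hp))
    exact NUCAProof.master_inv s e (H _ _ hUBS' hSI')
  · intro H M s hUBS hSI
    have hUBS' := NUCAProof.ubs_ltrans e.symm (NUCAProof.dualC s) (NUCAProof.ubs_dualC s hUBS)
    have hSPS' : StablyPostSurjectiveL (NUCAProof.ltrans e.symm (NUCAProof.dualC s)) := by
      intro r hr
      rw [← NUCAProof.ltrans_orbitClosure e.symm (NUCAProof.dualC s)] at hr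
      obtain ⟨w, hw, rfl⟩ := hr
      rw [← NUCAProof.dualC_orbitClosure s] at hw
      obtain ⟨p, hp, rfl⟩ := hw
      exact NUCAProof.postSurjective_ltrans e.symm (NUCAProof.dualC p)
        (NUCAProof.dualC_postSurjective_of_injective p (hSI p hp))
    exact NUCAProof.master_inv s e (H _ _ hUBS' hSPS')
end

section
/- Let G be an infinite finitely generated group, A a finite alphabet, M ⊆ G a finite subset, and S = A^(A^M). If s ∈ S^G has uniformly bounded singularity, then the orbit closure Σ(s) contains a constant configuration c ∈ S^G. -/
open Function Set Pointwise

section Aux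

variable {G : Type*} [Group G]

theorem exists_const_window {S : Type*} [Infinite G]
    (T : Finset G) (hT : Subgroup.closure (T : Set G) = ⊤)
    (s : G → S) (hubs : UniformlyBoundedSingularity s) (K : Finset G) :
    ∃ c : S, ∃ x : G, ∀ k ∈ K, s (x * k) = c := by
  classical
  set E : Finset G := (K ∪ T ∪ {1}) ∪ (K ∪ T ∪ {1})⁻¹ with hE
  have h1E : (1 : G) ∈ E := by simp [hE]
  have hsymm : ∀ g ∈ E, g⁻¹ ∈ E := by
    intro g hg
    simp only [hE, Finset.mem_union, Finset.mem_inv', inv_inv] at hg ⊢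
    tauto
  have hKE : K ⊆ E := fun k hk => by
    simp only [hE, Finset.mem_union]; left; left; left; exact hk
  have hTE : (T : Set G) ⊆ (E : Set G) := fun t ht => by
    simp only [Finset.mem_coe, hE, Finset.mem_union]
    left; left; right; exact ht
  have hEgen : Subgroup.closure (E : Set G) = ⊤ :=
    top_unique (hT ▸ Subgroup.closure_mono hTE)
  have h1E3 : (1 : G) ∈ E * E * E := by
    have := Finset.mul_mem_mul (Finset.mul_mem_mul h1E h1E) h1E
    simpa using this
  have hsymm3 : ∀ g ∈ E * E * E, g⁻¹ ∈ E * E * E := by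
    intro g hg
    obtain ⟨a, ha, b, hb, rfl⟩ := Finset.mem_mul.mp hg
    obtain ⟨a1, ha1, a2, ha2, rfl⟩ := Finset.mem_mul.mp ha
    have : (a1 * a2 * b)⁻¹ = b⁻¹ * a2⁻¹ * a1⁻¹ := by group
    rw [this]
    exact Finset.mul_mem_mul (Finset.mul_mem_mul (hsymm b hb) (hsymm a2 ha2)) (hsymm a1 ha1)
  obtain ⟨F, hEF, c, hc⟩ := hubs (E * E * E) h1E3 hsymm3
  have h1F : (1 : G) ∈ F := hEF h1E3
  by_cases hx : ∃ x, x ∈ F * E * E ∧ x ∉ F * E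
  · obtain ⟨x, hx1, hx2⟩ := hx
    refine ⟨c, x, fun k hk => ?_⟩
    apply hc
    constructor
    · have hmem : x * k ∈ F * E * E * E := Finset.mul_mem_mul hx1 (hKE hk)
      rw [mul_assoc, mul_assoc, ← mul_assoc E E E] at hmem
      rw [← Finset.coe_mul]
      exact hmem
    · intro hmem
      apply hx2
      have : (x * k) * k⁻¹ ∈ F * E := Finset.mul_mem_mul hmem (hsymm k (hKE hk))
      simpa using this
  · exfalso
    push_neg at hx
    have key : ∀ l : List G, (∀ y ∈ l, y ∈ E) → l.prod ∈ F * E := by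
      intro l
      induction l using List.reverseRecOn with
      | nil =>
        intro _
        simpa using Finset.mul_mem_mul h1F h1E
      | append_singleton l a ih =>
        intro h
        rw [List.prod_append, List.prod_singleton]
        exact hx _ (Finset.mul_mem_mul (ih fun y hy => h y (by simp [hy])) (h a (by simp)))
    have hall : ∀ g : G, g ∈ F * E := by
      intro g
      have hg : g ∈ Subgroup.closure (E : Set G) := hEgen ▸ Subgroup.mem_top g
      have hg' : g ∈ Submonoid.closure ((E : Set G) ∪ (E : Set G)⁻¹) := by
        rw [← Subgroup.closure_toSubmonoid]
        exact hg
      obtain ⟨l, hl, rfl⟩ := Submonoid.exists_list_of_mem_closure hg'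
      refine key l fun y hy => ?_
      rcases hl y hy with h | h
      · exact h
      · have h2 : y⁻¹ ∈ E := Set.mem_inv.mp h
        simpa using hsymm _ h2
    exact Set.infinite_univ (α := G)
      (Set.Finite.subset (F * E).finite_toSet fun g _ => hall g)

theorem mem_orbitClosure_of_forall_finset {S : Type*} (s : G → S) (p : G → S)
    (h : ∀ K : Finset G, ∃ g : G, ∀ k ∈ K, s (g⁻¹ * k) = p k) :
    p ∈ orbitClosure s := by
  letI : TopologicalSpace S := ⊥
  show p ∈ closure {q : G → S | ∃ g : G, q = fun h => s (g⁻¹ * h)}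
  rw [mem_closure_iff]
  intro o ho hpo
  obtain ⟨I, u, hu, hsub⟩ := isOpen_pi_iff.mp ho p hpo
  obtain ⟨g, hg⟩ := h I
  refine ⟨fun h => s (g⁻¹ * h), hsub ?_, ⟨g, rfl⟩⟩
  intro i hi
  show s (g⁻¹ * i) ∈ u i
  rw [hg i hi]
  exact (hu i hi).2

end Aux


/-- over an infinite finitely generated group and a finite
alphabet, the orbit closure of any configuration with uniformly bounded
singularity contains a constant configuration. -/
theorem constant_mem_orbitClosure_of_ubs {G A : Type*} [Group G] [Infinite G]
    [Group.FG G] [Fintype A] {M : Finset G} (s : G → ((M → A) → A))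
    (hubs : UniformlyBoundedSingularity s) :
    ∃ c : (M → A) → A, (fun _ : G => c) ∈ orbitClosure s := by
  classical
  haveI := Classical.decEq A
  obtain ⟨Ts, hTs, hTfin⟩ := Group.fg_iff.mp (inferInstance : Group.FG G)
  obtain ⟨T, rfl⟩ := hTfin.exists_finset_coe
  -- pigeonhole: a single constant works for all windows
  have step2 : ∃ c : (M → A) → A, ∀ K : Finset G, ∃ x : G, ∀ k ∈ K, s (x * k) = c := by
    by_contra hcon
    push_neg at hcon
    choose Kc hKc using hcon
    set Kstar : Finset G := Finset.univ.biUnion Kc with hKstar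
    obtain ⟨c, x, hx⟩ := exists_const_window T hTs s hubs Kstar
    obtain ⟨k, hk, hne⟩ := hKc c x
    exact hne (hx k (Finset.mem_biUnion.mpr ⟨c, Finset.mem_univ c, hk⟩))
  obtain ⟨c, hc⟩ := step2
  refine ⟨c, mem_orbitClosure_of_forall_finset s _ fun K => ?_⟩
  obtain ⟨x, hx⟩ := hc K
  exact ⟨x⁻¹, fun k hk => by simpa using hx k hk⟩
end

section
/- Let G be a group, A an alphabet, K ⊆ G a finite subset with 1_G ∈ K, and Q = A^(A^K). Let π : A^K → A be the projection z ↦ z(1_G). Let q ∈ Q^G and let F ⊆ G be a finite subset such that q(g) = π for all g ∈ G ∖ F, and set E = FK. Then: (a) σ_q(x)(g) = x(g) for every x ∈ A^G and every g ∈ G ∖ F; (b) if x, y ∈ A^G satisfy x|_E = y|_E, then σ_q(x)|_E = σ_q(y)|_E. Consequently there exists a map Φ : A^E → A^E such that for every x ∈ A^G, σ_q(x)|_E = Φ(x|_E) and σ_q(x)|_{G∖E} = x|_{G∖E}; that is, σ_q decomposes as Φ × Id_{A^{G∖E}}. -/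
open Function Set Pointwise

/-- if `q(g)` is the projection `π : z ↦ z(1)` outside a finite
set `F`, and `E = FK`, then (a) `σ_q(x)(g) = x(g)` for `g ∉ F`; (b) `σ_q(x)|_E`
only depends on `x|_E`; consequently `σ_q` decomposes as `Φ × Id_{A^{G∖E}}`. -/
theorem nuca_decomposition {G A : Type*} [Group G]
    (K : Finset G) (h1 : (1 : G) ∈ K)
    (q : G → ((K → A) → A)) (F : Finset G)
    (hq : ∀ g ∉ F, q g = fun z => z ⟨1, h1⟩) :
    (∀ (x : G → A), ∀ g ∉ F, nuca q x g = x g) ∧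
    (∀ x y : G → A, (∀ g ∈ (F : Set G) * (K : Set G), x g = y g) →
      ∀ g ∈ (F : Set G) * (K : Set G), nuca q x g = nuca q y g) ∧
    ∃ Φ : (((F : Set G) * (K : Set G) : Set G) → A) →
          (((F : Set G) * (K : Set G) : Set G) → A),
      ∀ x : G → A,
        (∀ g (hg : g ∈ (F : Set G) * (K : Set G)),
          nuca q x g = Φ (fun e => x e) ⟨g, hg⟩) ∧
        (∀ g ∉ (F : Set G) * (K : Set G), nuca q x g = x g) := by
  classical
  have ha : ∀ (x : G → A), ∀ g ∉ F, nuca q x g = x g := by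
    intro x g hg
    simp [nuca, hq g hg]
  have hmem : ∀ g ∈ F, ∀ m : K, g * (m : G) ∈ (F : Set G) * (K : Set G) := by
    intro g hg m
    exact ⟨g, hg, m, m.2, rfl⟩
  refine ⟨ha, ?_, ?_⟩
  · intro x y hxy g hg
    by_cases hF : g ∈ F
    · simp only [nuca]
      congr 1
      funext m
      exact hxy _ (hmem g hF m)
    · rw [ha x g hF, ha y g hF, hxy g hg]
  · refine ⟨fun u gg => if hF : (gg : G) ∈ F then
        q gg (fun m => u ⟨(gg : G) * m, hmem gg hF m⟩) else u gg, ?_⟩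
    intro x
    constructor
    · intro g hg
      by_cases hF : g ∈ F
      · simp only [nuca, dif_pos hF]
      · rw [ha x g hF]
        simp only [dif_neg hF]
    · intro g hg
      exact ha x g (fun hF => hg ⟨g, hF, 1, h1, mul_one g⟩)
end
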